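/- arXiv:0910.1359 — 8 statements merged into one kernel-verified Lean document; each statement's English description precedes it below -/
import Mathlib

section
/- Let X_σ be lognormal, i.e., log₁₀ X_σ is normally distributed with mean μ and standard deviation σ. Then for every z ∈ (0, 1], P({log₁₀ X_σ} < z) → z as σ → ∞; that is, X_σ tends to satisfy Benford's law as σ → ∞. -/
open MeasureTheory Set Filter ProbabilityTheory Real
open scoped NNReal ENNReal

namespace BenfordAux

/-- The Benford level set. -/
def S (z : ℝ) : Set ℝ := {x : ℝ | Int.fract x < z}

lemma measurableSet_S (z : ℝ) : MeasurableSet (S z) :=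
  measurable_fract measurableSet_Iio

/-- Measure of the slice `{t ∈ [0,1] : fract (y - t) < z}` is `z`. -/
lemma slice_volume {z : ℝ} (hz : z ∈ Ioc (0:ℝ) 1) (y : ℝ) :
    volume ((fun t => y - t) ⁻¹' S z ∩ Icc (0:ℝ) 1) = ENNReal.ofReal z := by
  obtain ⟨hz0, hz1⟩ := hz
  set a := Int.fract y with ha
  have ha0 : 0 ≤ a := Int.fract_nonneg y
  have ha1 : a < 1 := Int.fract_lt_one y
  have hya : (⌊y⌋ : ℝ) + a = y := by rw [ha]; exact Int.floor_add_fract y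
  have key1 : ∀ t : ℝ, 0 ≤ t → t ≤ a → Int.fract (y - t) = a - t := by
    intro t ht0 hta
    have h : y - t = (⌊y⌋ : ℝ) + (a - t) := by linarith
    rw [h, Int.fract_intCast_add, Int.fract_eq_self.2 ⟨by linarith, by linarith⟩]
  have key2 : ∀ t : ℝ, a < t → t ≤ 1 → Int.fract (y - t) = a - t + 1 := by
    intro t hta ht1
    have h : y - t = ((⌊y⌋ - 1 : ℤ) : ℝ) + (a - t + 1) := by push_cast; linarith
    rw [h, Int.fract_intCast_add, Int.fract_eq_self.2 ⟨by linarith, by linarith⟩]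
  have hsub : Ioc (max 0 (a - z)) a ∪ Ioc (a + 1 - z) 1
      ⊆ (fun t => y - t) ⁻¹' S z ∩ Icc 0 1 := by
    rintro t (⟨h1, h2⟩ | ⟨h1, h2⟩)
    · have ht0 : 0 ≤ t := le_of_lt (lt_of_le_of_lt (le_max_left _ _) h1)
      have htz : a - z < t := lt_of_le_of_lt (le_max_right 0 (a - z)) h1
      refine ⟨?_, ht0, le_trans h2 (le_of_lt ha1)⟩
      show Int.fract (y - t) < z
      rw [key1 t ht0 h2]; linarith
    · have hta : a < t := by linarith
      refine ⟨?_, by linarith, h2⟩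
      show Int.fract (y - t) < z
      rw [key2 t hta h2]; linarith
  have hsup : (fun t => y - t) ⁻¹' S z ∩ Icc 0 1
      ⊆ Icc (max 0 (a - z)) a ∪ Icc (a + 1 - z) 1 := by
    rintro t ⟨hfr, ht0, ht1⟩
    have hfr' : Int.fract (y - t) < z := hfr
    rcases le_or_gt t a with h | h
    · left
      rw [key1 t ht0 h] at hfr'
      exact ⟨max_le ht0 (by linarith), h⟩
    · right
      rw [key2 t h ht1] at hfr'
      exact ⟨by linarith, ht1⟩
  have hd : Disjoint (Ioc (max 0 (a - z)) a) (Ioc (a + 1 - z) 1) := by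
    rw [Set.Ioc_disjoint_Ioc]
    refine le_trans (min_le_left _ _) (le_trans (by linarith) (le_max_right _ _))
  have hval : ENNReal.ofReal (a - max 0 (a - z)) + ENNReal.ofReal (1 - (a + 1 - z))
      = ENNReal.ofReal z := by
    rcases le_total a z with h | h
    · rw [max_eq_left (by linarith), ← ENNReal.ofReal_add (by linarith) (by linarith)]
      congr 1; ring
    · rw [max_eq_right (by linarith),
        show ENNReal.ofReal (1 - (a + 1 - z)) = 0 from ENNReal.ofReal_eq_zero.2 (by linarith),
        add_zero]
      congr 1; ring
  refine le_antisymm ?_ ?_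
  · refine le_trans (measure_mono hsup) (le_trans (measure_union_le _ _) ?_)
    rw [Real.volume_Icc, Real.volume_Icc]
    exact le_of_eq hval
  · refine le_trans (le_of_eq ?_) (measure_mono hsub)
    rw [measure_union hd measurableSet_Ioc, Real.volume_Ioc, Real.volume_Ioc]
    exact hval.symm

lemma pdf_bound (m : ℝ) (v : ℝ≥0) (x : ℝ) :
    gaussianPDFReal m v x ≤ (Real.sqrt (2 * π * v))⁻¹ := by
  rw [gaussianPDFReal]
  have h1 : rexp (-(x - m) ^ 2 / (2 * v)) ≤ 1 := by
    rw [Real.exp_le_one_iff]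
    exact div_nonpos_of_nonpos_of_nonneg (neg_nonpos.2 (sq_nonneg _)) (by positivity)
  calc (Real.sqrt (2 * π * v))⁻¹ * rexp (-(x - m) ^ 2 / (2 * v))
      ≤ (Real.sqrt (2 * π * v))⁻¹ * 1 := by
        exact mul_le_mul_of_nonneg_left h1 (by positivity)
    _ = (Real.sqrt (2 * π * v))⁻¹ := mul_one _

lemma pdf_mono_left {m : ℝ} {v : ℝ≥0} {t u : ℝ} (ht : 0 ≤ t) (hu : u ≤ m - t / 2) :
    gaussianPDFReal m v u ≤ gaussianPDFReal m v (u + t) := by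
  rcases eq_or_ne v 0 with rfl | hv
  · simp
  have h2v : (0:ℝ) < 2 * v := by
    have : (0:ℝ) < v := NNReal.coe_pos.2 (zero_lt_iff.2 hv)
    linarith
  rw [gaussianPDFReal, gaussianPDFReal]
  refine mul_le_mul_of_nonneg_left (Real.exp_le_exp.2 ?_) (by positivity)
  rw [div_le_div_iff_of_pos_right h2v]
  nlinarith
  
lemma pdf_mono_right {m : ℝ} {v : ℝ≥0} {t u : ℝ} (ht : 0 ≤ t) (hu : m - t / 2 ≤ u) :
    gaussianPDFReal m v (u + t) ≤ gaussianPDFReal m v u := by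
  rcases eq_or_ne v 0 with rfl | hv
  · simp
  have h2v : (0:ℝ) < 2 * v := by
    have : (0:ℝ) < v := NNReal.coe_pos.2 (zero_lt_iff.2 hv)
    linarith
  rw [gaussianPDFReal, gaussianPDFReal]
  refine mul_le_mul_of_nonneg_left (Real.exp_le_exp.2 ?_) (by positivity)
  rw [div_le_div_iff_of_pos_right h2v]
  nlinarith

lemma lintegral_shift (f : ℝ → ℝ≥0∞) (hf : Measurable f) (t : ℝ) :
    ∫⁻ x, f (x + t) = ∫⁻ x, f x :=
  (measurePreserving_add_right volume t).lintegral_comp hf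

lemma setLIntegral_shift (f : ℝ → ℝ≥0∞) (hf : Measurable f) (t : ℝ) {s : Set ℝ}
    (hs : MeasurableSet s) :
    ∫⁻ x in (· + t) ⁻¹' s, f (x + t) = ∫⁻ x in s, f x :=
  (measurePreserving_add_right volume t).setLIntegral_comp_preimage hs hf

lemma pointwise_ofReal (a b : ℝ) :
    ENNReal.ofReal a ≤ ENNReal.ofReal b + ENNReal.ofReal (a - b) := by
  calc ENNReal.ofReal a = ENNReal.ofReal (b + (a - b)) := by ring_nf
    _ ≤ ENNReal.ofReal b + ENNReal.ofReal (a - b) := ENNReal.ofReal_add_le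

/-- measure of a gaussian on a short interval is at most length times sup of pdf -/
lemma interval_est (m : ℝ) (v : ℝ≥0) {c d : ℝ} (hcd : c ≤ d) :
    ∫⁻ u in Ioc c d, gaussianPDF m v u
      ≤ ENNReal.ofReal ((d - c) * (Real.sqrt (2 * π * v))⁻¹) := by
  calc ∫⁻ u in Ioc c d, gaussianPDF m v u
      ≤ ∫⁻ _ in Ioc c d, ENNReal.ofReal ((Real.sqrt (2 * π * v))⁻¹) := by
        refine setLIntegral_mono measurable_const fun x _ => ?_
        exact ENNReal.ofReal_le_ofReal (pdf_bound m v x)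
    _ = ENNReal.ofReal ((Real.sqrt (2 * π * v))⁻¹) * volume (Ioc c d) :=
        setLIntegral_const _ _
    _ = ENNReal.ofReal ((d - c) * (Real.sqrt (2 * π * v))⁻¹) := by
        rw [Real.volume_Ioc, ← ENNReal.ofReal_mul (by positivity)]
        congr 1; ring

lemma tail_est {m : ℝ} {v : ℝ≥0} (hv : v ≠ 0) {t : ℝ} (ht : 0 ≤ t) (T : Set ℝ) :
    ∫⁻ u in T ∩ Ioi (m - t / 2), gaussianPDF m v u ≤
      (∫⁻ u in T ∩ Ioi (m - t / 2), gaussianPDF m v (u + t))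
        + ENNReal.ofReal (t * (Real.sqrt (2 * π * v))⁻¹) := by
  set c := m - t / 2 with hc
  set E : ℝ → ℝ≥0∞ := fun u =>
    ENNReal.ofReal (gaussianPDFReal m v u - gaussianPDFReal m v (u + t)) with hE
  have hmeas_p : Measurable (gaussianPDF m v) := measurable_gaussianPDF m v
  have hmeas_pt : Measurable (fun u => gaussianPDF m v (u + t)) :=
    hmeas_p.comp (measurable_add_const t)
  have step1 : ∫⁻ u in T ∩ Ioi c, gaussianPDF m v u ≤
      (∫⁻ u in T ∩ Ioi c, gaussianPDF m v (u + t)) + ∫⁻ u in T ∩ Ioi c, E u := by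
    rw [← lintegral_add_left' (f := fun u => gaussianPDF m v (u + t)) hmeas_pt.aemeasurable]
    exact lintegral_mono fun u => pointwise_ofReal _ _
  have step2 : ∫⁻ u in T ∩ Ioi c, E u ≤ ∫⁻ u in Ioi c, E u :=
    lintegral_mono_set inter_subset_right
  have hle : ∀ u ∈ Ioi c, gaussianPDF m v (u + t) ≤ gaussianPDF m v u := fun u hu =>
    ENNReal.ofReal_le_ofReal (pdf_mono_right ht (le_of_lt hu))
  have step3 : ∫⁻ u in Ioi c, E u
      = (∫⁻ u in Ioi c, gaussianPDF m v u) - ∫⁻ u in Ioi c, gaussianPDF m v (u + t) := by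
    have : ∀ᵐ u ∂(volume.restrict (Ioi c)),
        (fun u => gaussianPDF m v (u + t)) u ≤ gaussianPDF m v u :=
      (ae_restrict_iff' measurableSet_Ioi).2 (ae_of_all _ hle)
    rw [← lintegral_sub hmeas_pt ?_ this]
    · refine lintegral_congr fun u => ?_
      rw [hE]
      exact ENNReal.ofReal_sub _ (gaussianPDFReal_nonneg m v _)
    · refine ne_of_lt (lt_of_le_of_lt (lintegral_mono_set (subset_univ _)) ?_)
      rw [Measure.restrict_univ, lintegral_shift _ hmeas_p t, lintegral_gaussianPDF_eq_one m hv]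
      exact ENNReal.one_lt_top
  have hshift : ∫⁻ u in Ioi c, gaussianPDF m v (u + t) = ∫⁻ u in Ioi (c + t), gaussianPDF m v u := by
    have hpre : (· + t) ⁻¹' Ioi (c + t) = Ioi c := by
      ext x; simp [mem_Ioi]
    rw [← hpre, setLIntegral_shift _ hmeas_p t measurableSet_Ioi]
  have hsplit : ∫⁻ u in Ioi c, gaussianPDF m v u
      = (∫⁻ u in Ioc c (c + t), gaussianPDF m v u) + ∫⁻ u in Ioi (c + t), gaussianPDF m v u := by
    rw [← lintegral_union measurableSet_Ioi, Set.Ioc_union_Ioi_eq_Ioi (by linarith)]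
    exact Set.Ioc_disjoint_Ioi le_rfl
  have step4 : (∫⁻ u in Ioi c, gaussianPDF m v u) - (∫⁻ u in Ioi c, gaussianPDF m v (u + t))
      ≤ ENNReal.ofReal (t * (Real.sqrt (2 * π * v))⁻¹) := by
    rw [hshift, hsplit]
    calc (∫⁻ u in Ioc c (c + t), gaussianPDF m v u) + (∫⁻ u in Ioi (c + t), gaussianPDF m v u)
          - (∫⁻ u in Ioi (c + t), gaussianPDF m v u)
        ≤ ∫⁻ u in Ioc c (c + t), gaussianPDF m v u := tsub_le_iff_right.2 le_rfl
      _ ≤ ENNReal.ofReal (t * (Real.sqrt (2 * π * v))⁻¹) := by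
          have := interval_est m v (c := c) (d := c + t) (by linarith)
          simpa using this
  calc ∫⁻ u in T ∩ Ioi c, gaussianPDF m v u
      ≤ (∫⁻ u in T ∩ Ioi c, gaussianPDF m v (u + t)) + ∫⁻ u in T ∩ Ioi c, E u := step1
    _ ≤ (∫⁻ u in T ∩ Ioi c, gaussianPDF m v (u + t)) + ∫⁻ u in Ioi c, E u :=
        add_le_add_right step2 _
    _ ≤ _ := add_le_add_right (le_trans (le_of_eq step3) step4) _

lemma head_est {m : ℝ} {v : ℝ≥0} (hv : v ≠ 0) {t : ℝ} (ht : 0 ≤ t) (T : Set ℝ) :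
    ∫⁻ u in T ∩ Iic (m - t / 2), gaussianPDF m v (u + t) ≤
      (∫⁻ u in T ∩ Iic (m - t / 2), gaussianPDF m v u)
        + ENNReal.ofReal (t * (Real.sqrt (2 * π * v))⁻¹) := by
  set c := m - t / 2 with hc
  set E : ℝ → ℝ≥0∞ := fun u =>
    ENNReal.ofReal (gaussianPDFReal m v (u + t) - gaussianPDFReal m v u) with hE
  have hmeas_p : Measurable (gaussianPDF m v) := measurable_gaussianPDF m v
  have hmeas_pt : Measurable (fun u => gaussianPDF m v (u + t)) :=
    hmeas_p.comp (measurable_add_const t)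
  have step1 : ∫⁻ u in T ∩ Iic c, gaussianPDF m v (u + t) ≤
      (∫⁻ u in T ∩ Iic c, gaussianPDF m v u) + ∫⁻ u in T ∩ Iic c, E u := by
    rw [← lintegral_add_left' (f := gaussianPDF m v) hmeas_p.aemeasurable]
    exact lintegral_mono fun u => pointwise_ofReal _ _
  have step2 : ∫⁻ u in T ∩ Iic c, E u ≤ ∫⁻ u in Iic c, E u :=
    lintegral_mono_set inter_subset_right
  have hle : ∀ u ∈ Iic c, gaussianPDF m v u ≤ gaussianPDF m v (u + t) := fun u hu =>
    ENNReal.ofReal_le_ofReal (pdf_mono_left ht hu)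
  have step3 : ∫⁻ u in Iic c, E u
      = (∫⁻ u in Iic c, gaussianPDF m v (u + t)) - ∫⁻ u in Iic c, gaussianPDF m v u := by
    have hae : ∀ᵐ u ∂(volume.restrict (Iic c)),
        gaussianPDF m v u ≤ (fun u => gaussianPDF m v (u + t)) u :=
      (ae_restrict_iff' measurableSet_Iic).2 (ae_of_all _ hle)
    rw [← lintegral_sub hmeas_p ?_ hae]
    · refine lintegral_congr fun u => ?_
      rw [hE]
      exact ENNReal.ofReal_sub _ (gaussianPDFReal_nonneg m v _)
    · refine ne_of_lt (lt_of_le_of_lt (lintegral_mono_set (subset_univ _)) ?_)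
      rw [Measure.restrict_univ, lintegral_gaussianPDF_eq_one m hv]
      exact ENNReal.one_lt_top
  have hshift : ∫⁻ u in Iic c, gaussianPDF m v (u + t)
      = ∫⁻ u in Iic (c + t), gaussianPDF m v u := by
    have hpre : (· + t) ⁻¹' Iic (c + t) = Iic c := by
      ext x; simp [mem_Iic]
    rw [← hpre, setLIntegral_shift _ hmeas_p t measurableSet_Iic]
  have hsplit : ∫⁻ u in Iic (c + t), gaussianPDF m v u
      = (∫⁻ u in Iic c, gaussianPDF m v u) + ∫⁻ u in Ioc c (c + t), gaussianPDF m v u := by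
    rw [← lintegral_union measurableSet_Ioc (Set.Iic_disjoint_Ioc le_rfl),
      Set.Iic_union_Ioc_eq_Iic (by linarith)]
  have step4 : (∫⁻ u in Iic c, gaussianPDF m v (u + t)) - (∫⁻ u in Iic c, gaussianPDF m v u)
      ≤ ENNReal.ofReal (t * (Real.sqrt (2 * π * v))⁻¹) := by
    rw [hshift, hsplit]
    calc (∫⁻ u in Iic c, gaussianPDF m v u) + (∫⁻ u in Ioc c (c + t), gaussianPDF m v u)
          - (∫⁻ u in Iic c, gaussianPDF m v u)
        ≤ ∫⁻ u in Ioc c (c + t), gaussianPDF m v u := tsub_le_iff_left.2 le_rfl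
      _ ≤ ENNReal.ofReal (t * (Real.sqrt (2 * π * v))⁻¹) := by
          have := interval_est m v (c := c) (d := c + t) (by linarith)
          simpa using this
  calc ∫⁻ u in T ∩ Iic c, gaussianPDF m v (u + t)
      ≤ (∫⁻ u in T ∩ Iic c, gaussianPDF m v u) + ∫⁻ u in T ∩ Iic c, E u := step1
    _ ≤ (∫⁻ u in T ∩ Iic c, gaussianPDF m v u) + ∫⁻ u in Iic c, E u := add_le_add_right step2 _
    _ ≤ _ := add_le_add_right (le_trans (le_of_eq step3) step4) _

lemma lintegral_S_split (z : ℝ) (c : ℝ) (f : ℝ → ℝ≥0∞) :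
    ∫⁻ u in S z, f u = (∫⁻ u in S z ∩ Iic c, f u) + ∫⁻ u in S z ∩ Ioi c, f u := by
  have h : S z = (S z ∩ Iic c) ∪ (S z ∩ Ioi c) := by
    rw [← inter_union_distrib_left, Iic_union_Ioi, inter_univ]
  conv_lhs => rw [h]
  exact lintegral_union ((measurableSet_S z).inter measurableSet_Ioi)
    ((Set.Iic_disjoint_Ioi le_rfl).mono inf_le_right inf_le_right)

lemma gaussian_bounds {m : ℝ} {v : ℝ≥0} (hv : v ≠ 0) (z : ℝ) {t : ℝ} (ht0 : 0 ≤ t) :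
    (∫⁻ u in S z, gaussianPDF m v u)
        ≤ (∫⁻ u in S z, gaussianPDF m v (u + t)) + ENNReal.ofReal (t * (Real.sqrt (2 * π * v))⁻¹)
    ∧ (∫⁻ u in S z, gaussianPDF m v (u + t))
        ≤ (∫⁻ u in S z, gaussianPDF m v u) + ENNReal.ofReal (t * (Real.sqrt (2 * π * v))⁻¹) := by
  set c := m - t / 2 with hc
  have hmeas_p : Measurable (gaussianPDF m v) := measurable_gaussianPDF m v
  have hmeas_pt : Measurable (fun u => gaussianPDF m v (u + t)) :=
    hmeas_p.comp (measurable_add_const t)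
  constructor
  · rw [lintegral_S_split z c (fun u => gaussianPDF m v u),
      lintegral_S_split z c (fun u => gaussianPDF m v (u + t))]
    have b1 : ∫⁻ u in S z ∩ Iic c, gaussianPDF m v u
        ≤ ∫⁻ u in S z ∩ Iic c, gaussianPDF m v (u + t) :=
      setLIntegral_mono hmeas_pt fun u hu =>
        ENNReal.ofReal_le_ofReal (pdf_mono_left ht0 hu.2)
    calc (∫⁻ u in S z ∩ Iic c, gaussianPDF m v u) + ∫⁻ u in S z ∩ Ioi c, gaussianPDF m v u
        ≤ (∫⁻ u in S z ∩ Iic c, gaussianPDF m v (u + t))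
            + ((∫⁻ u in S z ∩ Ioi c, gaussianPDF m v (u + t))
              + ENNReal.ofReal (t * (Real.sqrt (2 * π * v))⁻¹)) :=
          add_le_add b1 (tail_est hv ht0 (S z))
      _ = _ := by rw [add_assoc]
  · rw [lintegral_S_split z c (fun u => gaussianPDF m v (u + t)),
      lintegral_S_split z c (fun u => gaussianPDF m v u)]
    have b1 : ∫⁻ u in S z ∩ Ioi c, gaussianPDF m v (u + t)
        ≤ ∫⁻ u in S z ∩ Ioi c, gaussianPDF m v u :=
      setLIntegral_mono hmeas_p fun u hu =>
        ENNReal.ofReal_le_ofReal (pdf_mono_right ht0 (le_of_lt hu.2))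
    calc (∫⁻ u in S z ∩ Iic c, gaussianPDF m v (u + t))
          + ∫⁻ u in S z ∩ Ioi c, gaussianPDF m v (u + t)
        ≤ ((∫⁻ u in S z ∩ Iic c, gaussianPDF m v u)
            + ENNReal.ofReal (t * (Real.sqrt (2 * π * v))⁻¹))
          + ∫⁻ u in S z ∩ Ioi c, gaussianPDF m v u :=
          add_le_add (head_est hv ht0 (S z)) b1
      _ = _ := by ring

lemma avg_eq {m : ℝ} {v : ℝ≥0} (hv : v ≠ 0) {z : ℝ} (hz : z ∈ Ioc (0:ℝ) 1) :
    ∫⁻ t in Icc (0:ℝ) 1, (∫⁻ u in S z, gaussianPDF m v (u + t)) = ENNReal.ofReal z := by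
  have hmeas_p : Measurable (gaussianPDF m v) := measurable_gaussianPDF m v
  have hmeas_ind : Measurable ((S z).indicator (1 : ℝ → ℝ≥0∞)) :=
    measurable_const.indicator (measurableSet_S z)
  -- rewrite the inner integral via translation
  have hinner : ∀ t : ℝ, (∫⁻ u in S z, gaussianPDF m v (u + t))
      = ∫⁻ y, (S z).indicator (1 : ℝ → ℝ≥0∞) (y - t) * gaussianPDF m v y := by
    intro t
    have h1 : (∫⁻ u in S z, gaussianPDF m v (u + t))
        = ∫⁻ u, (S z).indicator (1 : ℝ → ℝ≥0∞) u * gaussianPDF m v (u + t) := by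
      rw [← lintegral_indicator (measurableSet_S z)]
      refine lintegral_congr fun u => ?_
      by_cases h : u ∈ S z <;> simp [h]
    have h2 : ∫⁻ u, (fun y => (S z).indicator (1 : ℝ → ℝ≥0∞) (y - t) * gaussianPDF m v y) (u + t)
        = ∫⁻ y, (S z).indicator (1 : ℝ → ℝ≥0∞) (y - t) * gaussianPDF m v y :=
      lintegral_shift _ ((hmeas_ind.comp (measurable_sub_const t)).mul hmeas_p) t
    rw [h1, ← h2]
    refine lintegral_congr fun u => ?_
    simp
  calc ∫⁻ t in Icc (0:ℝ) 1, (∫⁻ u in S z, gaussianPDF m v (u + t))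
      = ∫⁻ t in Icc (0:ℝ) 1, ∫⁻ y, (S z).indicator (1 : ℝ → ℝ≥0∞) (y - t)
          * gaussianPDF m v y ∂volume := lintegral_congr fun t => hinner t
    _ = ∫⁻ y, ∫⁻ t in Icc (0:ℝ) 1, (S z).indicator (1 : ℝ → ℝ≥0∞) (y - t)
          * gaussianPDF m v y ∂volume := by
        refine lintegral_lintegral_swap ?_
        refine AEMeasurable.mul ?_ ?_
        · exact ((hmeas_ind.comp (measurable_snd.sub measurable_fst))).aemeasurable
        · exact (hmeas_p.comp measurable_snd).aemeasurable
    _ = ∫⁻ y, ENNReal.ofReal z * gaussianPDF m v y ∂volume := by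
        refine lintegral_congr fun y => ?_
        have hmy : Measurable fun t : ℝ => (S z).indicator (1 : ℝ → ℝ≥0∞) (y - t) :=
          hmeas_ind.comp (measurable_const.sub measurable_id)
        rw [lintegral_mul_const _ hmy]
        congr 1
        have hindeq : ∀ t : ℝ, (S z).indicator (1 : ℝ → ℝ≥0∞) (y - t)
            = ((fun t => y - t) ⁻¹' S z).indicator (1 : ℝ → ℝ≥0∞) t := by
          intro t
          by_cases h : y - t ∈ S z <;> simp [Set.indicator, h, mem_preimage]
        calc ∫⁻ t in Icc (0:ℝ) 1, (S z).indicator (1 : ℝ → ℝ≥0∞) (y - t)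
            = ∫⁻ t in Icc (0:ℝ) 1, ((fun t => y - t) ⁻¹' S z).indicator (1 : ℝ → ℝ≥0∞) t :=
              lintegral_congr fun t => hindeq t
          _ = volume.restrict (Icc (0:ℝ) 1) ((fun t => y - t) ⁻¹' S z) := by
              have hpm : MeasurableSet ((fun t : ℝ => y - t) ⁻¹' S z) :=
                (measurable_const.sub measurable_id) (measurableSet_S z)
              exact lintegral_indicator_one hpm
          _ = ENNReal.ofReal z := by
              have hpm : MeasurableSet ((fun t : ℝ => y - t) ⁻¹' S z) :=
                (measurable_const.sub measurable_id) (measurableSet_S z)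
              rw [Measure.restrict_apply hpm]
              exact slice_volume hz y
    _ = ENNReal.ofReal z := by
        rw [lintegral_const_mul _ hmeas_p, lintegral_gaussianPDF_eq_one m hv, mul_one]

lemma gaussian_S_bounds {m : ℝ} {v : ℝ≥0} (hv : v ≠ 0) {z : ℝ} (hz : z ∈ Ioc (0:ℝ) 1) :
    gaussianReal m v (S z) ≤ ENNReal.ofReal z + ENNReal.ofReal ((Real.sqrt (2 * π * v))⁻¹)
    ∧ ENNReal.ofReal z ≤ gaussianReal m v (S z) + ENNReal.ofReal ((Real.sqrt (2 * π * v))⁻¹) := by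
  set M : ℝ := (Real.sqrt (2 * π * v))⁻¹ with hM
  have hM0 : 0 ≤ M := by positivity
  have hA : gaussianReal m v (S z) = ∫⁻ u in S z, gaussianPDF m v u := gaussianReal_apply m hv _
  set A : ℝ≥0∞ := ∫⁻ u in S z, gaussianPDF m v u with hAdef
  have hIcc : volume (Icc (0:ℝ) 1) = 1 := by
    rw [Real.volume_Icc]; norm_num
  have hbd : ∀ t ∈ Icc (0:ℝ) 1, ENNReal.ofReal (t * M) ≤ ENNReal.ofReal M := fun t ht =>
    ENNReal.ofReal_le_ofReal (by nlinarith [ht.1, ht.2])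
  constructor
  · rw [hA]
    have h1 : A * volume (Icc (0:ℝ) 1) ≤
        ∫⁻ t in Icc (0:ℝ) 1, ((∫⁻ u in S z, gaussianPDF m v (u + t)) + ENNReal.ofReal M) := by
      rw [← setLIntegral_const (Icc (0:ℝ) 1) A]
      refine lintegral_mono_ae ((ae_restrict_iff' measurableSet_Icc).2 (ae_of_all _ ?_))
      intro t ht
      exact le_trans (gaussian_bounds hv z ht.1).1 (add_le_add_right (hbd t ht) _)
    rw [hIcc, mul_one] at h1
    refine le_trans h1 (le_of_eq ?_)
    rw [lintegral_add_right _ measurable_const, avg_eq hv hz, setLIntegral_const, hIcc, mul_one]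
  · have h2 : ∫⁻ t in Icc (0:ℝ) 1, (∫⁻ u in S z, gaussianPDF m v (u + t))
        ≤ ∫⁻ t in Icc (0:ℝ) 1, (A + ENNReal.ofReal M) := by
      refine lintegral_mono_ae ((ae_restrict_iff' measurableSet_Icc).2 (ae_of_all _ ?_))
      intro t ht
      exact le_trans (gaussian_bounds hv z ht.1).2 (add_le_add_right (hbd t ht) _)
    rw [avg_eq hv hz, setLIntegral_const, hIcc, mul_one] at h2
    rw [hA]
    exact h2

end BenfordAux

/-- Lognormal r.v.'s tend to Benford's law: if `log₁₀ X_σ ~ N(m, σ²)`, then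
for every `z ∈ (0,1]`, `P({log₁₀ X_σ} < z) → z` as `σ → ∞`. -/
theorem lognormal_benford_limit
    (m : ℝ) (ν : ℝ≥0 → Measure ℝ)
    (hprob : ∀ σ, IsProbabilityMeasure (ν σ))
    (hpos : ∀ σ, (ν σ) (Ioi (0 : ℝ))ᶜ = 0)
    (hlog : ∀ σ : ℝ≥0, Measure.map (fun x => Real.logb 10 x) (ν σ)
      = gaussianReal m (σ ^ 2)) :
    ∀ z ∈ Ioc (0 : ℝ) 1,
      Tendsto (fun σ : ℝ≥0 =>
          ((ν σ) {x : ℝ | Int.fract (Real.logb 10 x) < z}).toReal)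
        atTop (nhds z) := by
  intro z hz
  have hS := BenfordAux.measurableSet_S z
  have hlogb : Measurable fun x : ℝ => Real.logb 10 x := by
    unfold Real.logb
    exact Real.measurable_log.div_const _
  set M : ℝ≥0 → ℝ := fun σ => (Real.sqrt (2 * π * (σ:ℝ) ^ 2))⁻¹ with hMdef
  have hM0 : ∀ σ : ℝ≥0, 0 ≤ M σ := fun σ => by positivity
  have key : ∀ σ : ℝ≥0, 1 ≤ σ →
      z - M σ ≤ ((ν σ) {x : ℝ | Int.fract (Real.logb 10 x) < z}).toReal ∧
      ((ν σ) {x : ℝ | Int.fract (Real.logb 10 x) < z}).toReal ≤ z + M σ := by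
    intro σ hσ1
    have hσ0 : σ ≠ 0 := by
      intro h; rw [h] at hσ1; exact absurd hσ1 (by norm_num)
    have hv : (σ ^ 2 : ℝ≥0) ≠ 0 := pow_ne_zero 2 hσ0
    have hmap : (ν σ) {x : ℝ | Int.fract (Real.logb 10 x) < z}
        = gaussianReal m (σ ^ 2) (BenfordAux.S z) := by
      rw [show {x : ℝ | Int.fract (Real.logb 10 x) < z}
          = (fun x => Real.logb 10 x) ⁻¹' (BenfordAux.S z) from rfl,
        ← Measure.map_apply hlogb hS, hlog σ]
    have hcast : ((σ ^ 2 : ℝ≥0) : ℝ) = (σ:ℝ) ^ 2 := by push_cast; ring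
    obtain ⟨hub, hlb⟩ := BenfordAux.gaussian_S_bounds (m := m) hv hz
    rw [hcast] at hub hlb
    have hfin : gaussianReal m (σ ^ 2) (BenfordAux.S z) ≠ ⊤ := measure_ne_top _ _
    constructor
    · rw [hmap]
      have h1 := ENNReal.toReal_mono (by finiteness) hlb
      rw [ENNReal.toReal_ofReal hz.1.le,
        ENNReal.toReal_add hfin ENNReal.ofReal_ne_top,
        ENNReal.toReal_ofReal (hM0 σ)] at h1
      linarith
    · rw [hmap]
      have h1 := ENNReal.toReal_mono (by finiteness) hub
      rw [ENNReal.toReal_add ENNReal.ofReal_ne_top ENNReal.ofReal_ne_top,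
        ENNReal.toReal_ofReal hz.1.le, ENNReal.toReal_ofReal (hM0 σ)] at h1
      linarith
  have hMten : Tendsto M atTop (nhds 0) := by
    have heq : ∀ σ : ℝ≥0, M σ = (Real.sqrt (2 * π))⁻¹ * ((σ:ℝ))⁻¹ := by
      intro σ
      rw [hMdef]
      simp only
      rw [show 2 * π * (σ:ℝ) ^ 2 = (2 * π) * (σ:ℝ) ^ 2 from by ring,
        Real.sqrt_mul (by positivity), Real.sqrt_sq σ.coe_nonneg, mul_inv]
    have h1 : Tendsto (fun σ : ℝ≥0 => ((σ:ℝ))⁻¹) atTop (nhds 0) :=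
      tendsto_inv_atTop_zero.comp (NNReal.tendsto_coe_atTop.2 tendsto_id)
    have h2 := h1.const_mul ((Real.sqrt (2 * π))⁻¹)
    rw [mul_zero] at h2
    exact h2.congr fun σ => (heq σ).symm
  refine tendsto_of_tendsto_of_tendsto_of_le_of_le'
    (g := fun σ => z - M σ) (h := fun σ => z + M σ) ?_ ?_ ?_ ?_
  · simpa using tendsto_const_nhds.sub hMten
  · simpa using tendsto_const_nhds.add hMten
  · exact eventually_atTop.2 ⟨1, fun σ hσ => (key σ hσ).1⟩
  · exact eventually_atTop.2 ⟨1, fun σ hσ => (key σ hσ).2⟩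
end

section
/- Let Y be normally distributed with mean μ and variance σ². Then for every z ∈ (0, 1], |P({Y} < z) − z| < 2/(σ√(2π)). In particular {Y} converges in law to uniform on [0,1) as σ → ∞. -/
open MeasureTheory Set Filter ProbabilityTheory
open scoped NNReal Real

namespace GaussFract

noncomputable def pdf (m σ : ℝ) : ℝ → ℝ := gaussianPDFReal m (σ ^ 2).toNNReal

noncomputable def D (m σ : ℝ) (y : ℝ) : ℝ := pdf m σ y * ((m - y) / σ ^ 2)

lemma pdf_eq (m : ℝ) {σ : ℝ} (hσ : 0 < σ) :
    pdf m σ = fun x => (Real.sqrt (2 * π * σ ^ 2))⁻¹ * Real.exp (-(x - m) ^ 2 / (2 * σ ^ 2)) := by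
  unfold pdf
  rw [gaussianPDFReal_def]
  simp only [Real.coe_toNNReal _ (sq_nonneg σ)]

lemma hasDerivAt_pdf (m : ℝ) {σ : ℝ} (hσ : 0 < σ) (y : ℝ) :
    HasDerivAt (pdf m σ) (D m σ y) y := by
  have hv2 : (0:ℝ) < σ ^ 2 := by positivity
  have h1 : HasDerivAt (fun y : ℝ => -(y - m) ^ 2 / (2 * σ ^ 2)) ((m - y) / σ ^ 2) y := by
    have h2 := (((hasDerivAt_id y).sub_const m).pow 2).neg.div_const (2 * σ ^ 2)
    refine h2.congr_deriv ?_
    simp only [id]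
    field_simp
    ring
  have h3 := (h1.exp).const_mul ((Real.sqrt (2 * π * σ ^ 2))⁻¹)
  rw [pdf_eq m hσ]
  unfold D
  rw [pdf_eq m hσ]
  refine h3.congr_deriv ?_
  ring

lemma continuous_D (m : ℝ) {σ : ℝ} (hσ : 0 < σ) : Continuous (D m σ) := by
  unfold D
  rw [pdf_eq m hσ]
  fun_prop

lemma integrable_D (m : ℝ) {σ : ℝ} (hσ : 0 < σ) : Integrable (D m σ) := by
  have hb : (0:ℝ) < 1 / (2 * σ ^ 2) := by positivity
  have h := ((integrable_mul_exp_neg_mul_sq hb).comp_sub_right m).const_mul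
    (-(Real.sqrt (2 * π * σ ^ 2))⁻¹ / σ ^ 2)
  refine h.congr (ae_of_all _ fun y => ?_)
  unfold D
  rw [pdf_eq m hσ]
  have he : -(1 / (2 * σ ^ 2)) * (y - m) ^ 2 = -(y - m) ^ 2 / (2 * σ ^ 2) := by ring
  simp only [he]
  ring

lemma tendsto_pdf_atTop (m : ℝ) {σ : ℝ} (hσ : 0 < σ) :
    Tendsto (pdf m σ) atTop (nhds 0) := by
  have hv2 : (0:ℝ) < 2 * σ ^ 2 := by positivity
  have h1 : Tendsto (fun y : ℝ => (y - m) ^ 2) atTop atTop := by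
    have := (tendsto_pow_atTop (two_ne_zero)).comp
      (tendsto_atTop_add_const_right atTop (-m) tendsto_id)
    refine this.congr fun y => by simp [sub_eq_add_neg]
  have h2 : Tendsto (fun y : ℝ => -(y - m) ^ 2 / (2 * σ ^ 2)) atTop atBot := by
    apply Tendsto.atBot_div_const hv2
    exact tendsto_neg_atBot_iff.mpr h1
  have h3 := (Real.tendsto_exp_atBot.comp h2).const_mul ((Real.sqrt (2 * π * σ ^ 2))⁻¹)
  rw [mul_zero] at h3
  rw [pdf_eq m hσ]
  exact h3

lemma tendsto_pdf_atBot (m : ℝ) {σ : ℝ} (hσ : 0 < σ) :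
    Tendsto (pdf m σ) atBot (nhds 0) := by
  have hv2 : (0:ℝ) < 2 * σ ^ 2 := by positivity
  have h1 : Tendsto (fun y : ℝ => (y - m) ^ 2) atBot atTop := by
    have := (tendsto_pow_atTop (two_ne_zero)).comp
      (tendsto_atTop_add_const_right atBot m tendsto_neg_atBot_atTop)
    refine this.congr fun y => by simp; ring
  have h2 : Tendsto (fun y : ℝ => -(y - m) ^ 2 / (2 * σ ^ 2)) atBot atBot := by
    apply Tendsto.atBot_div_const hv2
    exact tendsto_neg_atBot_iff.mpr h1
  have h3 := (Real.tendsto_exp_atBot.comp h2).const_mul ((Real.sqrt (2 * π * σ ^ 2))⁻¹)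
  rw [mul_zero] at h3
  rw [pdf_eq m hσ]
  exact h3

lemma pdf_nonneg (m σ : ℝ) (x : ℝ) : 0 ≤ pdf m σ x := gaussianPDFReal_nonneg _ _ x

lemma pdf_at_mean (m : ℝ) {σ : ℝ} (hσ : 0 < σ) : pdf m σ m = (σ * Real.sqrt (2 * π))⁻¹ := by
  rw [pdf_eq m hσ]
  have h : Real.sqrt (2 * π * σ ^ 2) = Real.sqrt (2 * π) * σ := by
    rw [Real.sqrt_mul (by positivity : (0:ℝ) ≤ 2 * π), Real.sqrt_sq hσ.le]
  have e : -((0:ℝ)) ^ 2 / (2 * σ ^ 2) = 0 := by norm_num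
  show (Real.sqrt (2 * π * σ ^ 2))⁻¹ * Real.exp (-(m - m) ^ 2 / (2 * σ ^ 2)) = _
  rw [sub_self, e, Real.exp_zero, mul_one, h, mul_comm]

lemma integral_abs_D (m : ℝ) {σ : ℝ} (hσ : 0 < σ) :
    ∫ x, |D m σ x| = 2 * pdf m σ m := by
  have hv2 : (0:ℝ) < σ ^ 2 := by positivity
  have hIic : ∫ x in Iic m, |D m σ x| = pdf m σ m := by
    have hd : ∀ x ∈ Iic m, HasDerivAt (pdf m σ) (D m σ x) x := fun x _ => hasDerivAt_pdf m hσ x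
    have h := integral_Iic_of_hasDerivAt_of_tendsto' hd
      (integrable_D m hσ).integrableOn (tendsto_pdf_atBot m hσ)
    rw [setIntegral_congr_fun measurableSet_Iic (fun x hx => ?_), h, sub_zero]
    exact abs_of_nonneg (mul_nonneg (pdf_nonneg m σ x)
      (div_nonneg (by simpa using hx.out) hv2.le))
  have hIoi : ∫ x in Ioi m, |D m σ x| = pdf m σ m := by
    have hd : ∀ x ∈ Ici m, HasDerivAt (pdf m σ) (D m σ x) x := fun x _ => hasDerivAt_pdf m hσ x
    have hneg : ∀ x ∈ Ioi m, D m σ x ≤ 0 := fun x hx =>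
      mul_nonpos_of_nonneg_of_nonpos (pdf_nonneg m σ x)
        (div_nonpos_of_nonpos_of_nonneg (by simp [le_of_lt hx.out]) hv2.le)
    have h := integral_Ioi_of_hasDerivAt_of_nonpos' hd hneg (tendsto_pdf_atTop m hσ)
    rw [setIntegral_congr_fun measurableSet_Ioi (fun x hx => abs_of_nonpos (hneg x hx)),
      integral_neg, h]
    ring
  rw [← integral_add_compl measurableSet_Iic (integrable_D m hσ).abs, compl_Iic, hIic, hIoi]
  ring


lemma disj_Ico {z : ℝ} (hz : z ≤ 1) :
    Pairwise (Function.onFun Disjoint (fun k : ℤ => Ico (k:ℝ) (k + z))) := by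
  intro j k hjk
  apply Set.Ico_disjoint_Ico.mpr
  rcases (Ne.lt_or_gt hjk) with h | h
  · have : (j:ℝ) + 1 ≤ (k:ℝ) := by exact_mod_cast Int.add_one_le_of_lt h
    calc ((j:ℝ) + z) ⊓ ((k:ℝ) + z) ≤ (j:ℝ) + z := min_le_left _ _
      _ ≤ (k:ℝ) := by linarith
      _ ≤ (j:ℝ) ⊔ (k:ℝ) := le_max_right _ _
  · have : (k:ℝ) + 1 ≤ (j:ℝ) := by exact_mod_cast Int.add_one_le_of_lt h
    calc ((j:ℝ) + z) ⊓ ((k:ℝ) + z) ≤ (k:ℝ) + z := min_le_right _ _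
      _ ≤ (j:ℝ) := by linarith
      _ ≤ (j:ℝ) ⊔ (k:ℝ) := le_max_left _ _

lemma disj_Ioc : Pairwise (Function.onFun Disjoint (fun k : ℤ => Ioc (k:ℝ) (k + 1))) := by
  intro j k hjk
  apply Set.Ioc_disjoint_Ioc.mpr
  rcases (Ne.lt_or_gt hjk) with h | h
  · have : (j:ℝ) + 1 ≤ (k:ℝ) := by exact_mod_cast Int.add_one_le_of_lt h
    calc ((j:ℝ) + 1) ⊓ ((k:ℝ) + 1) ≤ (j:ℝ) + 1 := min_le_left _ _
      _ ≤ (k:ℝ) := this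
      _ ≤ (j:ℝ) ⊔ (k:ℝ) := le_max_right _ _
  · have : (k:ℝ) + 1 ≤ (j:ℝ) := by exact_mod_cast Int.add_one_le_of_lt h
    calc ((j:ℝ) + 1) ⊓ ((k:ℝ) + 1) ≤ (k:ℝ) + 1 := min_le_right _ _
      _ ≤ (j:ℝ) := this
      _ ≤ (j:ℝ) ⊔ (k:ℝ) := le_max_left _ _

lemma iUnion_Ioc : (⋃ k : ℤ, Ioc (k:ℝ) (k + 1)) = univ := by
  ext x
  simp only [mem_iUnion, mem_Ioc, mem_univ, iff_true]
  refine ⟨⌈x⌉ - 1, ?_, ?_⟩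
  · push_cast
    have := Int.ceil_lt_add_one x
    linarith
  · push_cast
    have := Int.le_ceil x
    linarith

lemma iUnion_Ico : (⋃ k : ℤ, Ico (k:ℝ) (k + 1)) = univ := by
  ext x
  simp only [mem_iUnion, mem_Ico, mem_univ, iff_true]
  exact ⟨⌊x⌋, Int.floor_le x, Int.lt_floor_add_one x⟩

lemma fract_set_eq {z : ℝ} (hz0 : 0 < z) (hz1 : z ≤ 1) :
    {y : ℝ | Int.fract y < z} = ⋃ k : ℤ, Ico (k:ℝ) (k + z) := by
  ext y
  simp only [mem_setOf_eq, mem_iUnion, mem_Ico]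
  constructor
  · intro h
    refine ⟨⌊y⌋, Int.floor_le y, ?_⟩
    have : Int.fract y = y - ⌊y⌋ := rfl
    linarith [this ▸ h]
  · rintro ⟨k, hk1, hk2⟩
    have hfl : ⌊y⌋ = k := by
      rw [Int.floor_eq_iff]
      exact ⟨hk1, by linarith⟩
    have : Int.fract y = y - ⌊y⌋ := rfl
    rw [this, hfl]
    linarith

lemma key (m : ℝ) {σ : ℝ} (hσ : 0 < σ) {z : ℝ} (hz0 : 0 < z) (hz1 : z < 1) :
    |((gaussianReal m (σ ^ 2).toNNReal) {y : ℝ | Int.fract y < z}).toReal - z|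
      ≤ z * (2 / (σ * Real.sqrt (2 * π))) := by
  have hv : (σ ^ 2).toNNReal ≠ 0 :=
    ne_of_gt (Real.toNNReal_pos.mpr (by positivity))
  set f : ℝ → ℝ := pdf m σ with hf
  have hfint : Integrable f := integrable_gaussianPDFReal m _
  have hfnn : ∀ x, 0 ≤ f x := pdf_nonneg m σ
  have hDint := integrable_D m hσ
  -- the V sequence
  set V : ℤ → ℝ := fun k => ∫ x in Ioc (k:ℝ) (k + 1), |D m σ x| with hVdef
  have hVnn : ∀ k, 0 ≤ V k := fun k =>
    setIntegral_nonneg measurableSet_Ioc fun x _ => abs_nonneg _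
  have hVsum : HasSum V (2 * pdf m σ m) := by
    have h := hasSum_integral_iUnion (f := fun x => |D m σ x|) (μ := volume)
      (fun k : ℤ => measurableSet_Ioc) disj_Ioc
      (by rw [iUnion_Ioc]; exact hDint.abs.integrableOn)
    rw [iUnion_Ioc, setIntegral_univ, integral_abs_D m hσ] at h
    exact h
  -- the G and H sequences
  set A : Set ℝ := ⋃ k : ℤ, Ico (k:ℝ) (k + z) with hAdef
  have hAmeas : MeasurableSet A := MeasurableSet.iUnion fun _ => measurableSet_Ico
  set G : ℤ → ℝ := fun k => ∫ x in Ico (k:ℝ) (k + z), f x with hGdef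
  set H : ℤ → ℝ := fun k => ∫ x in Ico (k:ℝ) (k + 1), f x with hHdef
  have hG : HasSum G (∫ x in A, f x) :=
    hasSum_integral_iUnion (fun k : ℤ => measurableSet_Ico) (disj_Ico hz1.le)
      hfint.integrableOn
  have hH : HasSum H 1 := by
    have h := hasSum_integral_iUnion (f := f) (μ := volume)
      (fun k : ℤ => measurableSet_Ico) (disj_Ico le_rfl) hfint.integrableOn
    rw [iUnion_Ico, setIntegral_univ] at h
    have h1 : (∫ x, f x) = 1 := integral_gaussianPDFReal_eq_one m hv
    rwa [h1] at h
  -- termwise bound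
  have hterm : ∀ k : ℤ, |G k - z * H k| ≤ z * V k := by
    intro k
    have hsub : Ico (k:ℝ) (k + z) ⊆ Icc (k:ℝ) (k + 1) := fun x hx =>
      ⟨hx.1, by have := hx.2; linarith⟩
    have hsub1 : Ico (k:ℝ) (k + 1) ⊆ Icc (k:ℝ) (k + 1) := Ico_subset_Icc_self
    have hdiff : ∀ a ∈ Icc (k:ℝ) (k + 1), ∀ b ∈ Icc (k:ℝ) (k + 1), |f b - f a| ≤ V k := by
      intro a ha b hb
      have hfa : f b - f a = ∫ x in a..b, D m σ x :=
        (intervalIntegral.integral_eq_sub_of_hasDerivAt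
          (fun x _ => hasDerivAt_pdf m hσ x)
          ((continuous_D m hσ).intervalIntegrable a b)).symm
      rw [hfa, ← Real.norm_eq_abs]
      refine le_trans (intervalIntegral.norm_integral_le_integral_norm_uIoc) ?_
      have hsubI : Set.uIoc a b ⊆ Ioc (k:ℝ) (k + 1) := by
        unfold Set.uIoc
        exact Ioc_subset_Ioc (le_inf ha.1 hb.1) (sup_le ha.2 hb.2)
      simp only [Real.norm_eq_abs]
      exact setIntegral_mono_set (hDint.abs.integrableOn)
        (ae_of_all _ fun x => abs_nonneg _) (HasSubset.Subset.eventuallyLE hsubI)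
    have hpt_up : ∀ x ∈ Icc (k:ℝ) (k + 1), f x ≤ H k + V k := by
      intro x hx
      have h1 : (∫ _ in Ico (k:ℝ) ((k:ℝ) + 1), (f x - V k)) ≤ H k := by
        refine setIntegral_mono_on
          (integrableOn_const measure_Ico_lt_top.ne) hfint.integrableOn
          measurableSet_Ico (fun u hu => ?_)
        have := hdiff u (hsub1 hu) x hx
        obtain ⟨h2a, h2b⟩ := abs_le.mp this
        linarith
      rw [setIntegral_const, Real.volume_real_Ico_of_le (by linarith), show (k:ℝ) + 1 - k = 1 by ring, one_smul] at h1
      linarith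
    have hpt_dn : ∀ x ∈ Icc (k:ℝ) (k + 1), H k - V k ≤ f x := by
      intro x hx
      have h1 : H k ≤ ∫ _ in Ico (k:ℝ) ((k:ℝ) + 1), (f x + V k) := by
        refine setIntegral_mono_on hfint.integrableOn
          (integrableOn_const measure_Ico_lt_top.ne)
          measurableSet_Ico (fun u hu => ?_)
        have := hdiff u (hsub1 hu) x hx
        obtain ⟨h2a, h2b⟩ := abs_le.mp this
        linarith
      rw [setIntegral_const, Real.volume_real_Ico_of_le (by linarith), show (k:ℝ) + 1 - k = 1 by ring, one_smul] at h1
      linarith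
    have hGup : G k ≤ (H k + V k) * z := by
      have h1 : G k ≤ ∫ _ in Ico (k:ℝ) (k + z), (H k + V k) :=
        setIntegral_mono_on hfint.integrableOn
          (integrableOn_const measure_Ico_lt_top.ne)
          measurableSet_Ico (fun x hx => hpt_up x (hsub hx))
      rwa [setIntegral_const, Real.volume_real_Ico_of_le (by linarith), show (k:ℝ) + z - k = z by ring, smul_eq_mul, mul_comm] at h1
    have hGdn : (H k - V k) * z ≤ G k := by
      have h1 : ∫ _ in Ico (k:ℝ) (k + z), (H k - V k) ≤ G k :=
        setIntegral_mono_on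
          (integrableOn_const measure_Ico_lt_top.ne) hfint.integrableOn
          measurableSet_Ico (fun x hx => hpt_dn x (hsub hx))
      rwa [setIntegral_const, Real.volume_real_Ico_of_le (by linarith), show (k:ℝ) + z - k = z by ring, smul_eq_mul, mul_comm] at h1
    have e1 : (H k + V k) * z = z * H k + z * V k := by ring
    have e2 : (H k - V k) * z = z * H k - z * V k := by ring
    rw [abs_le]
    constructor <;> [linarith [e2 ▸ hGdn]; linarith [e1 ▸ hGup]]
  -- assemble
  have hT : HasSum (fun k => G k - z * H k) ((∫ x in A, f x) - z * 1) := hG.sub (hH.mul_left z)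
  have hzV : Summable fun k => z * V k := (hVsum.summable).mul_left z
  have habs : Summable fun k => |G k - z * H k| :=
    Summable.of_nonneg_of_le (fun k => abs_nonneg _) hterm hzV
  have hbound : |(∫ x in A, f x) - z * 1| ≤ z * (2 * pdf m σ m) := by
    rw [← hT.tsum_eq, ← Real.norm_eq_abs]
    refine le_trans (norm_tsum_le_tsum_norm (by simpa [Real.norm_eq_abs] using habs)) ?_
    simp only [Real.norm_eq_abs]
    calc ∑' k, |G k - z * H k| ≤ ∑' k, z * V k := Summable.tsum_le_tsum hterm habs hzV
      _ = z * ∑' k, V k := tsum_mul_left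
      _ = z * (2 * pdf m σ m) := by rw [hVsum.tsum_eq]
  have hμA : ((gaussianReal m (σ ^ 2).toNNReal) {y : ℝ | Int.fract y < z}).toReal
      = ∫ x in A, f x := by
    rw [fract_set_eq hz0 hz1.le, ← hAdef, gaussianReal_apply_eq_integral m hv]
    exact ENNReal.toReal_ofReal (setIntegral_nonneg hAmeas fun x _ => hfnn x)
  rw [hμA]
  have : 2 / (σ * Real.sqrt (2 * π)) = 2 * pdf m σ m := by
    rw [pdf_at_mean m hσ, div_eq_mul_inv]
  rw [this]
  simpa using hbound

end GaussFract

/-- If `Y ~ N(m, σ²)` then `|P({Y} < z) − z| < 2/(σ√(2π))` for every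
`z ∈ (0,1]`; in particular `{Y}` converges in law to the uniform
distribution on `[0,1)` as `σ → ∞`. -/
theorem gaussian_fract_near_uniform (m : ℝ) :
    (∀ σ : ℝ, 0 < σ → ∀ z ∈ Ioc (0 : ℝ) 1,
      |((gaussianReal m (σ ^ 2).toNNReal) {y : ℝ | Int.fract y < z}).toReal - z|
        < 2 / (σ * Real.sqrt (2 * π))) ∧
    ∀ z ∈ Ico (0 : ℝ) 1,
      Tendsto (fun σ : ℝ =>
          ((gaussianReal m (σ ^ 2).toNNReal) {y : ℝ | Int.fract y < z}).toReal)
        atTop (nhds z) := by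
  have hπ := Real.pi_pos
  constructor
  · intro σ hσ z hz
    obtain ⟨hz0, hz1⟩ := hz
    have hRHS : 0 < 2 / (σ * Real.sqrt (2 * π)) := by positivity
    rcases eq_or_lt_of_le hz1 with rfl | hz1'
    · have hset : {y : ℝ | Int.fract y < 1} = univ :=
        eq_univ_of_forall fun y => Int.fract_lt_one y
      rw [hset, measure_univ, ENNReal.toReal_one, sub_self, abs_zero]
      exact hRHS
    · calc |((gaussianReal m (σ ^ 2).toNNReal) {y : ℝ | Int.fract y < z}).toReal - z|
          ≤ z * (2 / (σ * Real.sqrt (2 * π))) := GaussFract.key m hσ hz0 hz1'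
        _ < 1 * (2 / (σ * Real.sqrt (2 * π))) := mul_lt_mul_of_pos_right hz1' hRHS
        _ = 2 / (σ * Real.sqrt (2 * π)) := one_mul _
  · intro z hz
    obtain ⟨hz0, hz1⟩ := hz
    rcases eq_or_lt_of_le hz0 with rfl | hz0'
    · have hset : {y : ℝ | Int.fract y < 0} = ∅ :=
        eq_empty_of_forall_notMem fun y hy => absurd hy (not_lt.mpr (Int.fract_nonneg y))
      simp only [hset, measure_empty, ENNReal.toReal_zero]
      exact tendsto_const_nhds
    · have hb : Tendsto (fun σ : ℝ => 2 / (σ * Real.sqrt (2 * π))) atTop (nhds 0) := by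
        have h1 : Tendsto (fun σ : ℝ => (2 / Real.sqrt (2 * π)) / σ) atTop (nhds 0) :=
          tendsto_const_nhds.div_atTop tendsto_id
        refine h1.congr fun σ => ?_
        rw [div_div, mul_comm]
      have hkey : ∀ᶠ σ : ℝ in atTop,
          ‖((gaussianReal m (σ ^ 2).toNNReal) {y : ℝ | Int.fract y < z}).toReal - z‖
            ≤ 2 / (σ * Real.sqrt (2 * π)) := by
        filter_upwards [eventually_gt_atTop 0] with σ hσ
        rw [Real.norm_eq_abs]
        refine le_trans (GaussFract.key m hσ hz0' hz1) ?_
        have hB : (0:ℝ) ≤ 2 / (σ * Real.sqrt (2 * π)) := by positivity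
        exact mul_le_of_le_one_left hB hz1.le
      have h0 := squeeze_zero_norm' hkey hb
      have h1 := h0.add_const z
      simpa using h1
end

section
/- Let X be uniformly distributed on (0, k] with k > 0. Then for every z ∈ (0, 1], |P({√X} < z) − z| < 4/√k. Consequently {√X_k} converges in law to the uniform distribution on [0,1) as k → ∞. -/
set_option maxHeartbeats 1000000


open MeasureTheory Set Filter

private lemma gauss_sum' (N : ℕ) : (∑ n ∈ Finset.Ico 1 N, (n : ℝ)) * 2 = N * (N - 1) := by
  induction N with
  | zero => simp
  | succ N ih =>
    rcases Nat.eq_zero_or_pos N with h | h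
    · subst h; simp
    · rw [Finset.sum_Ico_succ_top h]
      push_cast
      nlinarith [ih]

private lemma gauss_sum (N : ℕ) : (∑ n ∈ Finset.range N, (n : ℝ)) * 2 = N * (N - 1) := by
  induction N with
  | zero => simp
  | succ N ih =>
    rw [Finset.sum_range_succ]
    push_cast
    push_cast at ih
    nlinarith [ih]

private lemma sq_ord {z : ℝ} (hz0 : 0 ≤ z) (hz1 : z ≤ 1) {a b : ℕ} (hab : a < b) :
    ((a : ℝ) + z) ^ 2 ≤ (b : ℝ) ^ 2 := by
  have h1 : (a : ℝ) + 1 ≤ b := by exact_mod_cast hab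
  have h0 : (0 : ℝ) ≤ (a : ℝ) + z := by positivity
  nlinarith

private lemma vol_union {z : ℝ} (hz0 : 0 ≤ z) (hz1 : z ≤ 1) (F : Finset ℕ) :
    volume (⋃ n ∈ F, Ico ((n : ℝ) ^ 2) (((n : ℝ) + z) ^ 2))
      = ENNReal.ofReal (∑ n ∈ F, (((n : ℝ) + z) ^ 2 - (n : ℝ) ^ 2)) := by
  rw [measure_biUnion_finset ?_ (fun n _ => measurableSet_Ico),
    ENNReal.ofReal_sum_of_nonneg]
  · exact Finset.sum_congr rfl fun n _ => Real.volume_Ico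
  · intro n _
    have : (n : ℝ) ≤ (n : ℝ) + z := by linarith
    nlinarith [sq_nonneg ((n:ℝ))]
  · intro m hm n hn hmn
    rcases lt_or_gt_of_ne hmn with h | h
    · exact Set.Ico_disjoint_Ico.2
        (inf_le_left.trans ((sq_ord hz0 hz1 h).trans le_sup_right))
    · exact Set.Ico_disjoint_Ico.2
        (inf_le_right.trans ((sq_ord hz0 hz1 h).trans le_sup_left))

/-- If `X ~ U((0,k])` then `|P({√X} < z) − z| < 4/√k` for every `z ∈ (0,1]`;
consequently `{√X_k}` converges in law to the uniform distribution on `[0,1)`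
as `k → ∞`. -/
theorem uniform_sqrt_near_benford
    (μ : ℝ → Measure ℝ)
    (hμ : ∀ k : ℝ, 0 < k →
      μ k = (ENNReal.ofReal k)⁻¹ • volume.restrict (Ioc 0 k)) :
    (∀ k : ℝ, 0 < k → ∀ z ∈ Ioc (0 : ℝ) 1,
      |((μ k) {x : ℝ | Int.fract (Real.sqrt x) < z}).toReal - z|
        < 4 / Real.sqrt k) ∧
    ∀ z ∈ Ico (0 : ℝ) 1,
      Tendsto (fun k => ((μ k) {x : ℝ | Int.fract (Real.sqrt x) < z}).toReal)
        atTop (nhds z) := by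
  have key : ∀ k : ℝ, 0 < k → ∀ z ∈ Ioc (0 : ℝ) 1,
      |((μ k) {x : ℝ | Int.fract (Real.sqrt x) < z}).toReal - z|
        < 4 / Real.sqrt k := by
    intro k hk z hz
    obtain ⟨hz0, hz1⟩ := hz
    set s : ℝ := Real.sqrt k with hs
    have hs0 : 0 < s := Real.sqrt_pos.2 hk
    have hssq : s ^ 2 = k := Real.sq_sqrt hk.le
    set T : Set ℝ := {x : ℝ | Int.fract (Real.sqrt x) < z} with hT
    have hval : ((μ k) T).toReal = k⁻¹ * (volume (T ∩ Ioc 0 k)).toReal := by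
      rw [hμ k hk, Measure.smul_apply, Measure.restrict_apply' measurableSet_Ioc,
        smul_eq_mul, ENNReal.toReal_mul, ENNReal.toReal_inv,
        ENNReal.toReal_ofReal hk.le]
    have hvolIoc : volume (Ioc (0:ℝ) k) = ENNReal.ofReal k := by
      rw [Real.volume_Ioc, sub_zero]
    have hle : volume (T ∩ Ioc 0 k) ≤ ENNReal.ofReal k :=
      hvolIoc ▸ measure_mono inter_subset_right
    have hfin : volume (T ∩ Ioc 0 k) ≠ ⊤ :=
      (hle.trans_lt ENNReal.ofReal_lt_top).ne
    have hP01 : 0 ≤ ((μ k) T).toReal ∧ ((μ k) T).toReal ≤ 1 := by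
      refine ⟨ENNReal.toReal_nonneg, ?_⟩
      rw [hval]
      have h1 : (volume (T ∩ Ioc 0 k)).toReal ≤ k :=
        ENNReal.toReal_le_of_le_ofReal hk.le hle
      calc k⁻¹ * (volume (T ∩ Ioc 0 k)).toReal
          ≤ k⁻¹ * k := mul_le_mul_of_nonneg_left h1 (by positivity)
        _ = 1 := inv_mul_cancel₀ hk.ne'
    by_cases h16 : s < 4
    · have h1 : |((μ k) T).toReal - z| ≤ 1 := by
        rw [abs_le]
        constructor <;> [linarith [hP01.1]; linarith [hP01.2]]
      have : (1 : ℝ) < 4 / s := (one_lt_div hs0).2 h16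
      linarith
    · push_neg at h16
      set N : ℕ := ⌊s⌋₊ with hN
      have hNle : (N : ℝ) ≤ s := Nat.floor_le hs0.le
      have hNgt : s < (N : ℝ) + 1 := Nat.lt_floor_add_one s
      have hN0 : (0 : ℝ) ≤ (N : ℝ) := Nat.cast_nonneg N
      -- upper subset
      have hsubU : T ∩ Ioc 0 k ⊆
          ⋃ n ∈ Finset.range (N + 1), Ico ((n : ℝ) ^ 2) (((n : ℝ) + z) ^ 2) := by
        rintro x ⟨hxT, hx0, hxk⟩
        have hy0 : (0 : ℝ) ≤ Real.sqrt x := Real.sqrt_nonneg x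
        have hfl0 : (0 : ℤ) ≤ ⌊Real.sqrt x⌋ := Int.floor_nonneg.2 hy0
        set n : ℕ := (⌊Real.sqrt x⌋).toNat with hn
        have hcast : (n : ℝ) = ((⌊Real.sqrt x⌋ : ℤ) : ℝ) := by
          exact_mod_cast Int.toNat_of_nonneg hfl0
        have hny : (n : ℝ) ≤ Real.sqrt x := by
          rw [hcast]; exact Int.floor_le _
        have hyz : Real.sqrt x < (n : ℝ) + z := by
          have h := hxT
          rw [hT, mem_setOf_eq, Int.fract] at h
          rw [hcast]; linarith
        have hmem : n ∈ Finset.range (N + 1) := by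
          rw [Finset.mem_range, Nat.lt_succ_iff, hN]
          apply Nat.le_floor
          calc (n : ℝ) ≤ Real.sqrt x := hny
            _ ≤ s := Real.sqrt_le_sqrt hxk
        refine Set.mem_biUnion hmem ⟨?_, ?_⟩
        · nlinarith [Real.sq_sqrt hx0.le]
        · nlinarith [Real.sq_sqrt hx0.le]
      -- lower subset
      have hsubL : (⋃ n ∈ Finset.Ico 1 N, Ico ((n : ℝ) ^ 2) (((n : ℝ) + z) ^ 2))
          ⊆ T ∩ Ioc 0 k := by
        intro x hx
        rw [Set.mem_iUnion₂] at hx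
        obtain ⟨n, hn, hx1, hx2⟩ := hx
        rw [Finset.mem_Ico] at hn
        obtain ⟨hn1, hnN⟩ := hn
        have hn1' : (1 : ℝ) ≤ (n : ℝ) := by exact_mod_cast hn1
        have hnN' : (n : ℝ) + 1 ≤ (N : ℝ) := by exact_mod_cast hnN
        have hx0 : 0 < x := by nlinarith
        have hxk : x ≤ k := by nlinarith
        have hny : (n : ℝ) ≤ Real.sqrt x :=
          (Real.le_sqrt (by positivity) hx0.le).2 hx1
        have hyz : Real.sqrt x < (n : ℝ) + z :=
          (Real.sqrt_lt' (by linarith)).2 hx2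
        have hfl : ⌊Real.sqrt x⌋ = (n : ℤ) := by
          rw [Int.floor_eq_iff]
          constructor
          · push_cast; exact hny
          · push_cast; linarith
        refine ⟨?_, hx0, hxk⟩
        rw [hT, mem_setOf_eq, Int.fract, hfl]
        push_cast
        linarith
      -- sum bounds
      have hzs : z * s ≤ s := mul_le_of_le_one_left hs0.le hz1
      have hz2 : z ^ 2 ≤ z := by nlinarith
      have hzk : z * s ^ 2 = z * k := by rw [hssq]
      have hsumU : (∑ n ∈ Finset.range (N + 1),
          (((n : ℝ) + z) ^ 2 - (n : ℝ) ^ 2)) ≤ z * k + 3 * s := by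
        have hsplit : (∑ n ∈ Finset.range (N + 1), (((n : ℝ) + z) ^ 2 - (n : ℝ) ^ 2))
            = 2 * z * (∑ n ∈ Finset.range (N + 1), (n : ℝ)) + ((N : ℝ) + 1) * z ^ 2 := by
          calc (∑ n ∈ Finset.range (N + 1), (((n : ℝ) + z) ^ 2 - (n : ℝ) ^ 2))
              = ∑ n ∈ Finset.range (N + 1), (2 * z * (n : ℝ) + z ^ 2) :=
                Finset.sum_congr rfl fun n _ => by ring
            _ = _ := by
                rw [Finset.sum_add_distrib, ← Finset.mul_sum, Finset.sum_const,
                  Finset.card_range, nsmul_eq_mul]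
                push_cast; ring
        have hg := gauss_sum (N + 1)
        push_cast at hg
        have e1 : ((N : ℝ) + 1) * ((N : ℝ) + 1 - 1) ≤ (s + 1) * s := by nlinarith
        have e2 : z * (((N : ℝ) + 1) * ((N : ℝ) + 1 - 1)) ≤ z * ((s + 1) * s) :=
          mul_le_mul_of_nonneg_left e1 hz0.le
        have e3 : ((N : ℝ) + 1) * z ^ 2 ≤ (s + 1) * z := by nlinarith
        have e4 : z * ((s + 1) * s) = z * s ^ 2 + z * s := by ring
        have e5 : (s + 1) * z = z * s + z := by ring
        have e6 : 2 * z * (∑ n ∈ Finset.range (N + 1), (n : ℝ))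
            = z * (((N : ℝ) + 1) * ((N : ℝ) + 1 - 1)) := by
          rw [← hg]; ring
        rw [hsplit, e6]
        linarith
      have hsumL : z * k - 3 * s ≤ (∑ n ∈ Finset.Ico 1 N,
          (((n : ℝ) + z) ^ 2 - (n : ℝ) ^ 2)) := by
        have h1 : (∑ n ∈ Finset.Ico 1 N, 2 * z * (n : ℝ))
            ≤ ∑ n ∈ Finset.Ico 1 N, (((n : ℝ) + z) ^ 2 - (n : ℝ) ^ 2) :=
          Finset.sum_le_sum fun n _ => by nlinarith [sq_nonneg z]
        have hg := gauss_sum' N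
        rw [← Finset.mul_sum] at h1
        have e6 : 2 * z * (∑ n ∈ Finset.Ico 1 N, (n : ℝ))
            = z * ((N : ℝ) * ((N : ℝ) - 1)) := by
          rw [← hg]; ring
        have hsN : s - 1 ≤ (N : ℝ) := by linarith
        have f1 : (s - 1) * (s - 2) ≤ (N : ℝ) * ((N : ℝ) - 1) := by nlinarith
        have f2 : z * ((s - 1) * (s - 2)) ≤ z * ((N : ℝ) * ((N : ℝ) - 1)) :=
          mul_le_mul_of_nonneg_left f1 hz0.le
        have f3 : z * ((s - 1) * (s - 2)) = z * s ^ 2 - 3 * (z * s) + 2 * z := by ring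
        rw [e6] at h1
        linarith
      have hvolU : volume (T ∩ Ioc 0 k) ≤ ENNReal.ofReal (z * k + 3 * s) := by
        calc volume (T ∩ Ioc 0 k)
            ≤ volume (⋃ n ∈ Finset.range (N + 1),
                Ico ((n : ℝ) ^ 2) (((n : ℝ) + z) ^ 2)) := measure_mono hsubU
          _ = ENNReal.ofReal (∑ n ∈ Finset.range (N + 1),
                (((n : ℝ) + z) ^ 2 - (n : ℝ) ^ 2)) := vol_union hz0.le hz1 _
          _ ≤ _ := ENNReal.ofReal_le_ofReal hsumU
      have hvolL : ENNReal.ofReal (z * k - 3 * s) ≤ volume (T ∩ Ioc 0 k) := by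
        calc ENNReal.ofReal (z * k - 3 * s)
            ≤ ENNReal.ofReal (∑ n ∈ Finset.Ico 1 N,
                (((n : ℝ) + z) ^ 2 - (n : ℝ) ^ 2)) := ENNReal.ofReal_le_ofReal hsumL
          _ = volume (⋃ n ∈ Finset.Ico 1 N,
                Ico ((n : ℝ) ^ 2) (((n : ℝ) + z) ^ 2)) := (vol_union hz0.le hz1 _).symm
          _ ≤ _ := measure_mono hsubL
      have hU : (volume (T ∩ Ioc 0 k)).toReal ≤ z * k + 3 * s :=
        ENNReal.toReal_le_of_le_ofReal (add_nonneg (mul_nonneg hz0.le hk.le) (mul_nonneg (by norm_num) hs0.le)) hvolU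
      have hL : z * k - 3 * s ≤ (volume (T ∩ Ioc 0 k)).toReal :=
        (ENNReal.ofReal_le_iff_le_toReal hfin).1 hvolL
      rw [hval]
      have h3s : 3 * s / k = 3 / s := by
        rw [← hssq]; field_simp
      have hPl : z - 3 / s ≤ k⁻¹ * (volume (T ∩ Ioc 0 k)).toReal := by
        rw [← h3s, inv_mul_eq_div, le_div_iff₀ hk]
        have he : (z - 3 * s / k) * k = z * k - 3 * s := by field_simp
        linarith
      have hPu : k⁻¹ * (volume (T ∩ Ioc 0 k)).toReal ≤ z + 3 / s := by
        rw [← h3s, inv_mul_eq_div, div_le_iff₀ hk]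
        have he : (z + 3 * s / k) * k = z * k + 3 * s := by field_simp
        linarith
      have h34 : (3 : ℝ) / s < 4 / s := by
        have he : (4 : ℝ) / s - 3 / s = 1 / s := by ring
        have hp : (0 : ℝ) < 1 / s := by positivity
        linarith
      rw [abs_lt]
      constructor <;> linarith
  refine ⟨key, ?_⟩
  intro z hz
  obtain ⟨hz0, hz1⟩ := hz
  rcases eq_or_lt_of_le hz0 with h0 | h0
  · subst h0
    have hempty : {x : ℝ | Int.fract (Real.sqrt x) < (0 : ℝ)} = ∅ := by
      ext x
      simp only [mem_setOf_eq, mem_empty_iff_false, iff_false, not_lt]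
      exact Int.fract_nonneg _
    simp only [hempty, measure_empty, ENNReal.toReal_zero]
    exact tendsto_const_nhds
  · rw [tendsto_iff_dist_tendsto_zero]
    have hsqrt : Tendsto Real.sqrt atTop atTop := by
      rw [tendsto_atTop_atTop]
      intro b
      refine ⟨max 0 (b * b), fun a ha => ?_⟩
      rcases le_total b 0 with hb | hb
      · exact hb.trans (Real.sqrt_nonneg a)
      · have h1 : b * b ≤ a := le_trans (le_max_right _ _) ha
        calc b = Real.sqrt (b * b) := (Real.sqrt_mul_self hb).symm
          _ ≤ Real.sqrt a := Real.sqrt_le_sqrt h1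
    have h4 : Tendsto (fun k : ℝ => 4 / Real.sqrt k) atTop (nhds 0) :=
      tendsto_const_nhds.div_atTop hsqrt
    refine squeeze_zero' (Eventually.of_forall fun _ => dist_nonneg) ?_ h4
    filter_upwards [eventually_gt_atTop (0 : ℝ)] with k hk
    rw [Real.dist_eq]
    exact (key k hk z ⟨h0, hz1.le⟩).le
end

section
/- Let X be uniformly distributed on (0, k]. Then {πX²} converges in law to the uniform distribution on [0, 1) as k → ∞; i.e., for every δ ∈ (0, 1), P({πX²} < δ) → δ as k → ∞. -/
open MeasureTheory Set Filter
open scoped Real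

lemma sqrt_term_lower (x δ : ℝ) (hx : 0 ≤ x) (hδ0 : 0 ≤ δ) (hδ1 : δ ≤ 1) :
    δ * (Real.sqrt (x+2) - Real.sqrt (x+1)) ≤ Real.sqrt (x+δ) - Real.sqrt x := by
  have h0 : (0:ℝ) ≤ x + δ := by linarith
  have h1 : (0:ℝ) ≤ x + 1 := by linarith
  have h2 : (0:ℝ) ≤ x + 2 := by linarith
  have hs := Real.sq_sqrt hx
  have ht := Real.sq_sqrt h0
  have hu := Real.sq_sqrt h1
  have hv := Real.sq_sqrt h2
  have hsn := Real.sqrt_nonneg x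
  have htn := Real.sqrt_nonneg (x+δ)
  have hun := Real.sqrt_nonneg (x+1)
  have hvn := Real.sqrt_nonneg (x+2)
  have hts : Real.sqrt x ≤ Real.sqrt (x+δ) := Real.sqrt_le_sqrt (by linarith)
  have htu : Real.sqrt (x+δ) ≤ Real.sqrt (x+1) := Real.sqrt_le_sqrt (by linarith)
  have hsu : Real.sqrt x ≤ Real.sqrt (x+1) := Real.sqrt_le_sqrt (by linarith)
  have huv : Real.sqrt (x+1) ≤ Real.sqrt (x+2) := Real.sqrt_le_sqrt (by linarith)
  have huvpos : 0 < Real.sqrt (x+1) + Real.sqrt (x+2) := by nlinarith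
  nlinarith [mul_le_mul_of_nonneg_left (add_le_add htu (hsu)) (by linarith : (0:ℝ) ≤ Real.sqrt (x+δ) - Real.sqrt x)]

lemma sqrt_term_upper (x δ : ℝ) (hx : 0 ≤ x) (hδ0 : 0 ≤ δ) (hδ1 : δ ≤ 1) :
    Real.sqrt (x+1+δ) - Real.sqrt (x+1) ≤ δ * (Real.sqrt (x+1) - Real.sqrt x) := by
  have h0 : (0:ℝ) ≤ x + 1 + δ := by linarith
  have h1 : (0:ℝ) ≤ x + 1 := by linarith
  have ht := Real.sq_sqrt h0
  have hw := Real.sq_sqrt h1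
  have hs := Real.sq_sqrt hx
  have htn := Real.sqrt_nonneg (x+1+δ)
  have hwn := Real.sqrt_nonneg (x+1)
  have hsn := Real.sqrt_nonneg x
  have hst : Real.sqrt x ≤ Real.sqrt (x+1+δ) := Real.sqrt_le_sqrt (by linarith)
  have hwt : Real.sqrt (x+1) ≤ Real.sqrt (x+1+δ) := Real.sqrt_le_sqrt (by linarith)
  have hsw : Real.sqrt x ≤ Real.sqrt (x+1) := Real.sqrt_le_sqrt (by linarith)
  have hpos : 0 < Real.sqrt (x+1+δ) + Real.sqrt (x+1) := by nlinarith
  nlinarith [mul_le_mul_of_nonneg_left hst (mul_nonneg hδ0 (by linarith : (0:ℝ) ≤ Real.sqrt (x+1) - Real.sqrt x))]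

lemma sum_lower (δ : ℝ) (hδ0 : 0 ≤ δ) (hδ1 : δ ≤ 1) (M : ℕ) :
    δ * (Real.sqrt (M+1) - 1) ≤ ∑ n ∈ Finset.range M, (Real.sqrt (n+δ) - Real.sqrt n) := by
  have key : ∑ n ∈ Finset.range M, (Real.sqrt ((n:ℝ)+1+1) - Real.sqrt ((n:ℝ)+1))
      = Real.sqrt (M+1) - 1 := by
    have := Finset.sum_range_sub (fun n : ℕ => Real.sqrt ((n:ℝ)+1)) M
    simp only [Nat.cast_add, Nat.cast_one] at this
    rw [this]
    norm_num
  calc δ * (Real.sqrt (M+1) - 1)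
      = ∑ n ∈ Finset.range M, δ * (Real.sqrt ((n:ℝ)+1+1) - Real.sqrt ((n:ℝ)+1)) := by
        rw [← Finset.mul_sum, key]
    _ ≤ ∑ n ∈ Finset.range M, (Real.sqrt (n+δ) - Real.sqrt n) := by
        apply Finset.sum_le_sum
        intro n _
        have := sqrt_term_lower n δ (Nat.cast_nonneg n) hδ0 hδ1
        have e : (n:ℝ)+1+1 = (n:ℝ)+2 := by ring
        rw [e]
        exact this

lemma sum_upper (δ : ℝ) (hδ0 : 0 ≤ δ) (hδ1 : δ ≤ 1) (M : ℕ) :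
    ∑ n ∈ Finset.range (M+1), (Real.sqrt (n+δ) - Real.sqrt n) ≤ 1 + δ * Real.sqrt M := by
  rw [Finset.sum_range_succ' (fun n : ℕ => Real.sqrt ((n:ℝ)+δ) - Real.sqrt (n:ℝ)) M]
  have h0 : Real.sqrt ((0:ℕ)+δ) - Real.sqrt ((0:ℕ):ℝ) ≤ 1 := by
    simp only [Nat.cast_zero, zero_add, Real.sqrt_zero, sub_zero]
    calc Real.sqrt δ ≤ Real.sqrt 1 := Real.sqrt_le_sqrt hδ1
      _ = 1 := Real.sqrt_one
  have h1 : ∑ n ∈ Finset.range M, (Real.sqrt ((n+1:ℕ)+δ) - Real.sqrt ((n+1:ℕ):ℝ))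
      ≤ δ * Real.sqrt M := by
    have tele : ∑ n ∈ Finset.range M, δ * (Real.sqrt ((n:ℝ)+1) - Real.sqrt (n:ℝ))
        = δ * Real.sqrt M := by
      have t2 := Finset.sum_range_sub (fun n : ℕ => Real.sqrt (n:ℝ)) M
      simp only [Nat.cast_add, Nat.cast_one, Nat.cast_zero, Real.sqrt_zero, sub_zero] at t2
      rw [← Finset.mul_sum, t2]
    rw [← tele]
    apply Finset.sum_le_sum
    intro n _
    have := sqrt_term_upper n δ (Nat.cast_nonneg n) hδ0 hδ1
    push_cast
    convert this using 3 <;> ring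
  linarith

lemma vol_bounds (δ k : ℝ) (hδ0 : 0 < δ) (hδ1 : δ < 1) (hk : 0 < k) :
    δ * k - 1 ≤ (volume ({x : ℝ | Int.fract (π * x ^ 2) < δ} ∩ Ioc 0 k)).toReal ∧
    (volume ({x : ℝ | Int.fract (π * x ^ 2) < δ} ∩ Ioc 0 k)).toReal ≤ δ * k + 1 := by
  have hπ : (0:ℝ) < π := Real.pi_pos
  have hsπ : (1:ℝ) ≤ Real.sqrt π := by
    rw [show (1:ℝ) = Real.sqrt 1 by simp]
    exact Real.sqrt_le_sqrt (by linarith [Real.pi_gt_three])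
  have hsπ0 : (0:ℝ) < Real.sqrt π := by linarith
  set S : Set ℝ := {x : ℝ | Int.fract (π * x ^ 2) < δ} with hS
  set M : ℕ := ⌊π * k ^ 2⌋₊ with hM
  set a : ℕ → ℝ := fun n => Real.sqrt (n / π) with ha
  set b : ℕ → ℝ := fun n => Real.sqrt ((n + δ) / π) with hb
  have hMle : (M : ℝ) ≤ π * k ^ 2 := Nat.floor_le (by positivity)
  have hMgt : π * k ^ 2 < M + 1 := Nat.lt_floor_add_one _
  have hab : ∀ n : ℕ, a n ≤ b n := fun n => Real.sqrt_le_sqrt (by gcongr; linarith)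
  have han : ∀ n : ℕ, 0 ≤ a n := fun n => Real.sqrt_nonneg _
  have hdiff : ∀ n : ℕ, b n - a n = (Real.sqrt (n + δ) - Real.sqrt n) / Real.sqrt π := by
    intro n
    simp only [ha, hb, Real.sqrt_div' _ hπ.le, sub_div]
  have hba : ∀ n : ℕ, b n ≤ a (n+1) := by
    intro n
    apply Real.sqrt_le_sqrt
    push_cast
    gcongr
  have hamono : ∀ m n : ℕ, m ≤ n → a m ≤ a n := by
    intro m n h
    apply Real.sqrt_le_sqrt
    gcongr
  -- lower inclusion
  have hincl_lo : ∀ n ∈ Finset.range M, Ioo (a n) (b n) ⊆ S ∩ Ioc 0 k := by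
    intro n hn x hx
    obtain ⟨hx1, hx2⟩ := hx
    have hxpos : 0 < x := lt_of_le_of_lt (han n) hx1
    have hx1' : (n : ℝ) / π < x ^ 2 := (Real.sqrt_lt' hxpos).mp hx1
    have hx2' : x ^ 2 < ((n : ℝ) + δ) / π := (Real.lt_sqrt hxpos.le).mp hx2
    have hy1 : (n : ℝ) < π * x ^ 2 := by
      rw [div_lt_iff₀ hπ] at hx1'; linarith [hx1']
    have hy2 : π * x ^ 2 < (n : ℝ) + δ := by
      rw [lt_div_iff₀ hπ] at hx2'; linarith [hx2']
    have hfl : ⌊π * x ^ 2⌋ = (n : ℤ) := by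
      rw [Int.floor_eq_iff]
      constructor
      · push_cast; linarith
      · push_cast; linarith
    have hfract : Int.fract (π * x ^ 2) < δ := by
      rw [Int.fract, hfl]; push_cast; linarith
    have hnM : (n : ℝ) + 1 ≤ (M : ℝ) := by exact_mod_cast Finset.mem_range.mp hn
    have hbk : b n ≤ k := by
      rw [hb]
      have : ((n : ℝ) + δ) / π ≤ k ^ 2 := by
        rw [div_le_iff₀ hπ]; nlinarith
      calc Real.sqrt (((n:ℝ) + δ) / π) ≤ Real.sqrt (k ^ 2) := Real.sqrt_le_sqrt this
        _ = k := Real.sqrt_sq hk.le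
    exact ⟨hfract, hxpos, le_trans hx2.le hbk⟩
  -- upper inclusion
  have hincl_hi : S ∩ Ioc 0 k ⊆ ⋃ n ∈ Finset.range (M+1), Ico (a n) (b n) := by
    rintro x ⟨hxS, hx0, hxk⟩
    have hy0 : 0 < π * x ^ 2 := by positivity
    set m : ℤ := ⌊π * x ^ 2⌋ with hm
    have hm0 : 0 ≤ m := Int.floor_nonneg.mpr hy0.le
    set n : ℕ := m.toNat with hn
    have hnm : (n : ℝ) = (m : ℝ) := by exact_mod_cast Int.toNat_of_nonneg hm0
    have hy1 : (n : ℝ) ≤ π * x ^ 2 := by rw [hnm]; exact Int.floor_le _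
    have hy2 : π * x ^ 2 < (n : ℝ) + δ := by
      have : Int.fract (π * x ^ 2) = π * x ^ 2 - (m : ℝ) := rfl
      rw [hS] at hxS
      simp only [mem_setOf_eq] at hxS
      rw [Int.fract] at hxS
      rw [hnm]; linarith [hxS]
    have hx2k : x ^ 2 ≤ k ^ 2 := by nlinarith
    have hyk : π * x ^ 2 ≤ π * k ^ 2 := by nlinarith
    have hnM : n ∈ Finset.range (M+1) := by
      rw [Finset.mem_range, Nat.lt_succ_iff, hM]
      exact Nat.le_floor (by linarith)
    refine mem_iUnion₂.mpr ⟨n, hnM, ?_, ?_⟩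
    · rw [ha]
      have : (n : ℝ) / π ≤ x ^ 2 := by rw [div_le_iff₀ hπ]; linarith
      calc Real.sqrt ((n:ℝ) / π) ≤ Real.sqrt (x ^ 2) := Real.sqrt_le_sqrt this
        _ = x := Real.sqrt_sq hx0.le
    · rw [hb]
      have : x ^ 2 < ((n : ℝ) + δ) / π := by rw [lt_div_iff₀ hπ]; linarith
      exact (Real.lt_sqrt hx0.le).mpr this
  -- disjointness
  have hdisj' : ∀ i j : ℕ, i < j → Disjoint (Ioo (a i) (b i)) (Ioo (a j) (b j)) := by
    intro i j hij
    apply Set.disjoint_left.mpr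
    rintro x ⟨_, hxb⟩ ⟨hxa, _⟩
    have : b i ≤ a j := le_trans (hba i) (hamono _ _ hij)
    linarith
  have hdisj : ((Finset.range M : Finset ℕ) : Set ℕ).PairwiseDisjoint
      (fun n => Ioo (a n) (b n)) := by
    intro i _ j _ hij
    rcases Ne.lt_or_gt hij with h | h
    · exact hdisj' i j h
    · exact (hdisj' j i h).symm
  -- measure of lower union
  have hmeas_lo : volume (⋃ n ∈ Finset.range M, Ioo (a n) (b n))
      = ∑ n ∈ Finset.range M, ENNReal.ofReal (b n - a n) := by
    rw [measure_biUnion_finset hdisj (fun n _ => measurableSet_Ioo)]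
    simp [Real.volume_Ioo]
  have hfin : volume (S ∩ Ioc 0 k) ≠ ⊤ := by
    refine (lt_of_le_of_lt (measure_mono inter_subset_right) ?_).ne
    rw [Real.volume_Ioc]; exact ENNReal.ofReal_lt_top
  -- ENNReal bounds
  have hlowENN : ∑ n ∈ Finset.range M, ENNReal.ofReal (b n - a n) ≤ volume (S ∩ Ioc 0 k) := by
    rw [← hmeas_lo]
    exact measure_mono (iUnion₂_subset hincl_lo)
  have hhiENN : volume (S ∩ Ioc 0 k) ≤ ∑ n ∈ Finset.range (M+1), ENNReal.ofReal (b n - a n) := by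
    refine le_trans (measure_mono hincl_hi) ?_
    refine le_trans (measure_biUnion_finset_le _ _) ?_
    apply Finset.sum_le_sum
    intro n _
    rw [Real.volume_Ico]
  -- convert to real
  have hsum_toReal : ∀ N : ℕ, (∑ n ∈ Finset.range N, ENNReal.ofReal (b n - a n)).toReal
      = ∑ n ∈ Finset.range N, (b n - a n) := by
    intro N
    rw [ENNReal.toReal_sum (fun n _ => ENNReal.ofReal_ne_top)]
    exact Finset.sum_congr rfl fun n _ => ENNReal.toReal_ofReal (by linarith [hab n])
  have hlow : ∑ n ∈ Finset.range M, (b n - a n) ≤ (volume (S ∩ Ioc 0 k)).toReal := by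
    rw [← hsum_toReal M]
    exact ENNReal.toReal_mono hfin hlowENN
  have hhi : (volume (S ∩ Ioc 0 k)).toReal ≤ ∑ n ∈ Finset.range (M+1), (b n - a n) := by
    rw [← hsum_toReal (M+1)]
    exact ENNReal.toReal_mono (by simp [ENNReal.sum_lt_top]) hhiENN
  -- rewrite sums
  have hsum_eq : ∀ N : ℕ, ∑ n ∈ Finset.range N, (b n - a n)
      = (∑ n ∈ Finset.range N, (Real.sqrt (n + δ) - Real.sqrt n)) / Real.sqrt π := by
    intro N
    rw [Finset.sum_div]
    exact Finset.sum_congr rfl fun n _ => hdiff n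
  -- sqrt comparisons
  have hsqM1 : Real.sqrt π * k ≤ Real.sqrt ((M:ℝ) + 1) := by
    have : Real.sqrt (π * k ^ 2) ≤ Real.sqrt ((M:ℝ)+1) := Real.sqrt_le_sqrt hMgt.le
    rwa [Real.sqrt_mul hπ.le, Real.sqrt_sq hk.le] at this
  have hsqM : Real.sqrt (M:ℝ) ≤ Real.sqrt π * k := by
    have : Real.sqrt (M:ℝ) ≤ Real.sqrt (π * k ^ 2) := Real.sqrt_le_sqrt hMle
    rwa [Real.sqrt_mul hπ.le, Real.sqrt_sq hk.le] at this
  rw [hsum_eq M] at hlow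
  rw [hsum_eq (M+1)] at hhi
  constructor
  · refine le_trans ?_ hlow
    rw [le_div_iff₀ hsπ0]
    refine le_trans ?_ (sum_lower δ hδ0.le hδ1.le M)
    have h1 := mul_le_mul_of_nonneg_left hsqM1 hδ0.le
    nlinarith [h1]
  · refine le_trans hhi ?_
    rw [div_le_iff₀ hsπ0]
    refine le_trans (sum_upper δ hδ0.le hδ1.le M) ?_
    have h1 := mul_le_mul_of_nonneg_left hsqM hδ0.le
    nlinarith [h1]

/-- Theorem 3: if `X ~ U((0,k])`, then `{πX²}` converges in law to the
uniform distribution on `[0,1)` as `k → ∞`. -/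
theorem uniform_pi_sq_benford_limit
    (μ : ℝ → Measure ℝ)
    (hμ : ∀ k : ℝ, 0 < k →
      μ k = (ENNReal.ofReal k)⁻¹ • volume.restrict (Ioc 0 k)) :
    ∀ δ ∈ Ioo (0 : ℝ) 1,
      Tendsto (fun k => ((μ k) {x : ℝ | Int.fract (π * x ^ 2) < δ}).toReal)
        atTop (nhds δ) := by
  rintro δ ⟨hδ0, hδ1⟩
  have hSm : MeasurableSet {x : ℝ | Int.fract (π * x ^ 2) < δ} := by
    apply measurableSet_lt _ measurable_const
    exact Measurable.fract (by measurability)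
  have key : ∀ k : ℝ, 0 < k →
      ((μ k) {x : ℝ | Int.fract (π * x ^ 2) < δ}).toReal
        = (volume ({x : ℝ | Int.fract (π * x ^ 2) < δ} ∩ Ioc 0 k)).toReal / k := by
    intro k hk
    rw [hμ k hk, Measure.smul_apply, Measure.restrict_apply hSm, smul_eq_mul,
      ENNReal.toReal_mul, ENNReal.toReal_inv, ENNReal.toReal_ofReal hk.le,
      inv_mul_eq_div]
  have h0 : Tendsto (fun k : ℝ => 1 / k) atTop (nhds 0) := by
    simpa [one_div] using tendsto_inv_atTop_zero
  apply tendsto_of_tendsto_of_tendsto_of_le_of_le'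
    (g := fun k : ℝ => δ - 1 / k) (h := fun k : ℝ => δ + 1 / k)
  · simpa using tendsto_const_nhds.sub h0
  · simpa using tendsto_const_nhds.add h0
  · filter_upwards [eventually_gt_atTop (0:ℝ)] with k hk
    rw [key k hk]
    have := (vol_bounds δ k hδ0 hδ1 hk).1
    rw [le_div_iff₀ hk]
    have e : (δ - 1 / k) * k = δ * k - 1 := by field_simp
    linarith
  · filter_upwards [eventually_gt_atTop (0:ℝ)] with k hk
    rw [key k hk]
    have := (vol_bounds δ k hδ0 hδ1 hk).2
    rw [div_le_iff₀ hk]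
    have e : (δ + 1 / k) * k = δ * k + 1 := by field_simp
    linarith
end

section
/- For a = k√π and any δ ∈ (0,1), if X is uniform on (0,k] and Y = πX², then (δ/a)·(√(⌊a²−δ⌋+1+δ) − √δ) ≤ P({Y} < δ) ≤ (δ/a)·√(⌊a²−δ⌋+1) + √δ/a. -/
open MeasureTheory Set
open scoped Real

lemma sqrt_step_lower (x δ : ℝ) (hx : 0 ≤ x) (hδ : 0 < δ) :
    δ * (Real.sqrt (x + 1 + δ) - Real.sqrt (x + δ)) ≤ Real.sqrt (x + δ) - Real.sqrt x := by
  set u := Real.sqrt x with hu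
  set v := Real.sqrt (x + δ) with hv
  set w := Real.sqrt (x + 1 + δ) with hw
  have hu0 : 0 ≤ u := Real.sqrt_nonneg _
  have hv0 : 0 < v := Real.sqrt_pos.mpr (by linarith)
  have hw0 : 0 ≤ w := Real.sqrt_nonneg _
  have hu2 : u ^ 2 = x := Real.sq_sqrt hx
  have hv2 : v ^ 2 = x + δ := Real.sq_sqrt (by linarith)
  have hw2 : w ^ 2 = x + 1 + δ := Real.sq_sqrt (by linarith)
  have huv : u ≤ v := Real.sqrt_le_sqrt (by linarith)
  have hvw : v ≤ w := Real.sqrt_le_sqrt (by linarith)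
  nlinarith [mul_pos hv0 hv0, sq_nonneg (w - v), sq_nonneg (v - u), mul_nonneg hu0 hw0,
    mul_nonneg (sub_nonneg.mpr huv) (sub_nonneg.mpr hvw)]

lemma sqrt_step_upper (x δ : ℝ) (hx : 0 ≤ x) (hδ : 0 < δ) :
    Real.sqrt (x + 1 + δ) - Real.sqrt (x + 1) ≤ δ * (Real.sqrt (x + 1) - Real.sqrt x) := by
  set u := Real.sqrt x with hu
  set v := Real.sqrt (x + 1) with hv
  set w := Real.sqrt (x + 1 + δ) with hw
  have hu0 : 0 ≤ u := Real.sqrt_nonneg _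
  have hv0 : 0 < v := Real.sqrt_pos.mpr (by linarith)
  have hw0 : 0 ≤ w := Real.sqrt_nonneg _
  have hu2 : u ^ 2 = x := Real.sq_sqrt hx
  have hv2 : v ^ 2 = x + 1 := Real.sq_sqrt (by linarith)
  have hw2 : w ^ 2 = x + 1 + δ := Real.sq_sqrt (by linarith)
  have huv : u ≤ v := Real.sqrt_le_sqrt (by linarith)
  have hvw : v ≤ w := Real.sqrt_le_sqrt (by linarith)
  nlinarith [mul_pos hv0 hv0, sq_nonneg (w - v), sq_nonneg (v - u), mul_nonneg hu0 hw0,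
    mul_nonneg (sub_nonneg.mpr huv) (sub_nonneg.mpr hvw)]

/-- Volume of `Ico a' b' ∩ Ioc 0 k` for `0 ≤ a' ≤ b'`, `0 < k`. -/
lemma vol_piece (a' b' k : ℝ) (h0 : 0 ≤ a') (hab : a' ≤ b') (hk : 0 < k) :
    volume (Ico a' b' ∩ Ioc 0 k) = ENNReal.ofReal (min b' k - min a' k) := by
  have hae : (Ico a' b' ∩ Ioc 0 k : Set ℝ) =ᵐ[volume] Ioc a' (min b' k) := by
    rw [MeasureTheory.ae_eq_set]
    constructor
    · refine measure_mono_null (fun x hx => ?_) (Real.volume_singleton (a := a'))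
      obtain ⟨⟨⟨hx1, hx2⟩, hx3, hx4⟩, hx5⟩ := hx
      simp only [mem_Ioc, not_and, not_le] at hx5
      have hxle : ¬ a' < x := by
        intro h
        exact absurd (le_min hx2.le hx4) (not_le.mpr (hx5 h))
      have : x = a' := le_antisymm (not_lt.mp hxle) hx1
      simpa [mem_singleton_iff] using this
    · refine measure_mono_null (fun x hx => ?_) (Real.volume_singleton (a := b'))
      obtain ⟨⟨hx1, hx2⟩, hx3⟩ := hx
      have hxb : x ≤ b' := le_trans hx2 (min_le_left _ _)
      have hxk : x ≤ k := le_trans hx2 (min_le_right _ _)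
      have hx0 : 0 < x := lt_of_le_of_lt h0 hx1
      simp only [mem_inter_iff, mem_Ico, mem_Ioc, not_and, not_lt, not_le] at hx3
      rcases lt_or_eq_of_le hxb with h | h
      · exact absurd hxk (not_le.mpr (hx3 ⟨le_of_lt hx1, h⟩ hx0))
      · simpa [mem_singleton_iff] using h
  rw [measure_congr hae, Real.volume_Ioc]
  rcases le_total a' k with h | h
  · rw [min_eq_left h]
  · have h1 : min a' k = k := min_eq_right h
    have h2 : min b' k = k := min_eq_right (le_trans h hab)
    rw [h1, h2, sub_self, ENNReal.ofReal_zero, ENNReal.ofReal_eq_zero]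
    linarith

/-- Key estimate in the proof of Theorem 3: for `X ~ U((0,k])`, `Y = πX²`,
`a = k√π` and `δ ∈ (0,1)`,
`(δ/a)(√(⌊a²−δ⌋+1+δ) − √δ) ≤ P({Y} < δ) ≤ (δ/a)√(⌊a²−δ⌋+1) + √δ/a`. -/
theorem uniform_pi_sq_fract_bounds
    (k : ℝ) (hk : 0 < k)
    (μ : Measure ℝ)
    (hμ : μ = (ENNReal.ofReal k)⁻¹ • volume.restrict (Ioc 0 k))
    (a : ℝ) (ha : a = k * Real.sqrt π)
    (δ : ℝ) (hδ : δ ∈ Ioo (0 : ℝ) 1) :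
    (δ / a) * (Real.sqrt ((⌊a ^ 2 - δ⌋ : ℝ) + 1 + δ) - Real.sqrt δ)
        ≤ (μ {x : ℝ | Int.fract (π * x ^ 2) < δ}).toReal ∧
    (μ {x : ℝ | Int.fract (π * x ^ 2) < δ}).toReal
        ≤ (δ / a) * Real.sqrt ((⌊a ^ 2 - δ⌋ : ℝ) + 1) + Real.sqrt δ / a := by
  obtain ⟨hδ0, hδ1⟩ := hδ
  have hπ : (0:ℝ) < π := Real.pi_pos
  have hsπ : 0 < Real.sqrt π := Real.sqrt_pos.mpr hπ
  have ha0 : 0 < a := ha ▸ mul_pos hk hsπ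
  have ha2 : a ^ 2 = π * k ^ 2 := by
    rw [ha, mul_pow, Real.sq_sqrt hπ.le]; ring
  have ha2pos : 0 < a ^ 2 := pow_pos ha0 2
  set M : ℤ := ⌊a ^ 2 - δ⌋ with hM
  have hMle : (M : ℝ) ≤ a ^ 2 - δ := Int.floor_le _
  have hMlt : a ^ 2 - δ < (M : ℝ) + 1 := Int.lt_floor_add_one _
  have hM1 : 0 ≤ M + 1 := by
    have h1 : (-1 : ℤ) ≤ M := by
      rw [hM, Int.le_floor]; push_cast; linarith
    linarith
  set N : ℕ := (M + 1).toNat with hN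
  have hNcast : (N : ℝ) = (M : ℝ) + 1 := by
    have h := Int.toNat_of_nonneg hM1
    rw [hN]
    exact_mod_cast congrArg (Int.cast : ℤ → ℝ) h
  set A : ℕ → ℝ := fun n => Real.sqrt n / Real.sqrt π with hA
  set B : ℕ → ℝ := fun n => Real.sqrt ((n : ℝ) + δ) / Real.sqrt π with hB
  have hAB : ∀ n, A n ≤ B n := fun n =>
    div_le_div_of_nonneg_right (Real.sqrt_le_sqrt (by linarith)) hsπ.le
  have hA0 : ∀ n, 0 ≤ A n := fun n => div_nonneg (Real.sqrt_nonneg _) hsπ.le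
  have hsq : ∀ x : ℝ, 0 < x → Real.sqrt (π * x ^ 2) = Real.sqrt π * x := by
    intro x hx
    rw [Real.sqrt_mul hπ.le, Real.sqrt_sq hx.le]
  have hmem : ∀ (n : ℕ) (x : ℝ), 0 < x →
      (x ∈ Ico (A n) (B n) ↔ (n : ℝ) ≤ π * x ^ 2 ∧ π * x ^ 2 < (n : ℝ) + δ) := by
    intro n x hx
    rw [mem_Ico, hA, hB]
    simp only []
    rw [div_le_iff₀ hsπ, lt_div_iff₀ hsπ, mul_comm x (Real.sqrt π), ← hsq x hx]
    constructor
    · rintro ⟨h1, h2⟩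
      exact ⟨(Real.sqrt_le_sqrt_iff (by positivity)).mp h1,
        (Real.sqrt_lt_sqrt_iff (by positivity)).mp h2⟩
    · rintro ⟨h1, h2⟩
      exact ⟨Real.sqrt_le_sqrt h1, Real.sqrt_lt_sqrt (by positivity) h2⟩
  set S : Set ℝ := {x : ℝ | Int.fract (π * x ^ 2) < δ} with hS
  have hSm : MeasurableSet S := by
    apply measurableSet_lt _ measurable_const
    exact Measurable.fract (by measurability)
  -- the set decomposition
  have hset : S ∩ Ioc 0 k = ⋃ n ∈ Finset.range (N + 1), (Ico (A n) (B n) ∩ Ioc 0 k) := by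
    ext x
    simp only [hS, mem_inter_iff, mem_setOf_eq, Finset.mem_range, mem_iUnion, exists_prop,
      mem_Ioc]
    constructor
    · rintro ⟨hfr, hx0, hxk⟩
      have hy0 : 0 < π * x ^ 2 := by positivity
      have hm0 : 0 ≤ ⌊π * x ^ 2⌋ := Int.floor_nonneg.mpr hy0.le
      refine ⟨⌊π * x ^ 2⌋.toNat, ?_, ?_, hx0, hxk⟩
      · have hx2 : π * x ^ 2 ≤ a ^ 2 := by
          rw [ha2]
          have : x ^ 2 ≤ k ^ 2 := by nlinarith
          nlinarith
        have hcast : ((⌊π * x ^ 2⌋.toNat : ℤ) : ℝ) = (⌊π * x ^ 2⌋ : ℝ) := by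
          exact_mod_cast congrArg (Int.cast : ℤ → ℝ) (Int.toNat_of_nonneg hm0)
        have hup : ⌊π * x ^ 2⌋ ≤ M + 1 := by
          by_contra h
          push_neg at h
          have h' : M + 2 ≤ ⌊π * x ^ 2⌋ := by omega
          have h2 : ((M : ℝ) + 2) ≤ (⌊π * x ^ 2⌋ : ℝ) := by exact_mod_cast h'
          have h3 : (⌊π * x ^ 2⌋ : ℝ) ≤ π * x ^ 2 := Int.floor_le _
          linarith
        have : ⌊π * x ^ 2⌋.toNat ≤ N := by
          rw [hN]; exact Int.toNat_le_toNat hup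
        omega
      · rw [hmem _ x hx0]
        have hcast : ((⌊π * x ^ 2⌋.toNat : ℕ) : ℝ) = (⌊π * x ^ 2⌋ : ℝ) := by
          exact_mod_cast congrArg (Int.cast : ℤ → ℝ) (Int.toNat_of_nonneg hm0)
        rw [hcast]
        have hfl : (⌊π * x ^ 2⌋ : ℝ) ≤ π * x ^ 2 := Int.floor_le _
        have hfr' : π * x ^ 2 - (⌊π * x ^ 2⌋ : ℝ) < δ := by
          rw [Int.fract] at hfr; exact hfr
        exact ⟨hfl, by linarith⟩
    · rintro ⟨n, hn, hico, hx0, hxk⟩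
      refine ⟨?_, hx0, hxk⟩
      obtain ⟨h1, h2⟩ := (hmem n x hx0).mp hico
      have hfl : ⌊π * x ^ 2⌋ = (n : ℤ) := by
        rw [Int.floor_eq_iff]
        constructor
        · exact_mod_cast h1
        · push_cast; linarith
      rw [Int.fract, hfl]
      push_cast
      linarith
  -- disjointness
  have hdisj : (↑(Finset.range (N + 1)) : Set ℕ).PairwiseDisjoint
      (fun n => Ico (A n) (B n) ∩ Ioc 0 k) := by
    intro i _ j _ hij
    refine Set.disjoint_left.mpr fun x hxi hxj => hij ?_
    obtain ⟨hi, hx0, _⟩ := hxi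
    obtain ⟨hj, _, _⟩ := hxj
    obtain ⟨hi1, hi2⟩ := (hmem i x hx0).mp hi
    obtain ⟨hj1, hj2⟩ := (hmem j x hx0).mp hj
    have h1 : (i : ℝ) < (j : ℝ) + 1 := by linarith
    have h2 : (j : ℝ) < (i : ℝ) + 1 := by linarith
    have h1' : i < j + 1 := by exact_mod_cast h1
    have h2' : j < i + 1 := by exact_mod_cast h2
    omega
  -- volume computation
  have hvol : volume (S ∩ Ioc 0 k)
      = ∑ n ∈ Finset.range (N + 1), ENNReal.ofReal (min (B n) k - min (A n) k) := by
    rw [hset, measure_biUnion_finset hdisj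
      (fun n _ => (measurableSet_Ico.inter measurableSet_Ioc))]
    exact Finset.sum_congr rfl fun n _ => vol_piece (A n) (B n) k (hA0 n) (hAB n) hk
  have hcnn : ∀ n, 0 ≤ min (B n) k - min (A n) k := by
    intro n
    have := min_le_min (hAB n) (le_refl k)
    linarith
  have hμS : (μ S).toReal
      = k⁻¹ * ∑ n ∈ Finset.range (N + 1), (min (B n) k - min (A n) k) := by
    rw [hμ, Measure.smul_apply, Measure.restrict_apply hSm, hvol, smul_eq_mul,
      ENNReal.toReal_mul, ENNReal.toReal_inv, ENNReal.toReal_ofReal hk.le]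
    congr 1
    rw [ENNReal.toReal_sum (fun n _ => ENNReal.ofReal_ne_top)]
    exact Finset.sum_congr rfl fun n _ => ENNReal.toReal_ofReal (hcnn n)
  -- general upper bound on each term
  have hc_upper : ∀ n, min (B n) k - min (A n) k ≤ B n - A n := by
    intro n
    rcases le_total (A n) k with h | h
    · rw [min_eq_left h]
      have := min_le_left (B n) k
      linarith
    · rw [min_eq_right h, min_eq_right (le_trans h (hAB n))]
      have := hAB n
      linarith
  -- full terms
  have hc_full : ∀ n < N, min (B n) k - min (A n) k = B n - A n := by
    intro n hn
    have hnM : (n : ℤ) ≤ M := by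
      have h' : (n : ℤ) < M + 1 := Int.lt_toNat.mp (hN ▸ hn)
      omega
    have hnr : (n : ℝ) ≤ a ^ 2 - δ := by
      rw [hM] at hnM
      exact_mod_cast Int.le_floor.mp hnM
    have hBk : B n ≤ k := by
      rw [hB]
      simp only []
      rw [div_le_iff₀ hsπ]
      have h1 : Real.sqrt ((n : ℝ) + δ) ≤ Real.sqrt (a ^ 2) := Real.sqrt_le_sqrt (by linarith)
      rw [Real.sqrt_sq ha0.le, ha] at h1
      linarith
    rw [min_eq_left hBk, min_eq_left (le_trans (hAB n) hBk)]
  constructor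
  · -- lower bound
    rw [hμS]
    have step : ∀ n ∈ Finset.range N, δ * (B (n + 1) - B n) ≤ min (B n) k - min (A n) k := by
      intro n hn
      rw [hc_full n (Finset.mem_range.mp hn), hA, hB]
      simp only []
      push_cast
      rw [div_sub_div_same, div_sub_div_same, ← mul_div_assoc]
      apply div_le_div_of_nonneg_right _ hsπ.le
      exact sqrt_step_lower (n : ℝ) δ (Nat.cast_nonneg n) hδ0
    have hdrop : ∑ n ∈ Finset.range N, (min (B n) k - min (A n) k)
        ≤ ∑ n ∈ Finset.range (N + 1), (min (B n) k - min (A n) k) := by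
      rw [Finset.sum_range_succ]
      linarith [hcnn N]
    have htel : ∑ n ∈ Finset.range N, δ * (B (n + 1) - B n) = δ * (B N - B 0) := by
      rw [← Finset.mul_sum, Finset.sum_range_sub]
    have hsum : δ * (B N - B 0) ≤ ∑ n ∈ Finset.range (N + 1), (min (B n) k - min (A n) k) := by
      calc δ * (B N - B 0) = ∑ n ∈ Finset.range N, δ * (B (n + 1) - B n) := htel.symm
        _ ≤ ∑ n ∈ Finset.range N, (min (B n) k - min (A n) k) := Finset.sum_le_sum step
        _ ≤ _ := hdrop
    have hfin : (δ / a) * (Real.sqrt ((M : ℝ) + 1 + δ) - Real.sqrt δ)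
        = k⁻¹ * (δ * (B N - B 0)) := by
      rw [hB]
      simp only []
      rw [hNcast]
      push_cast
      rw [zero_add, ha]
      field_simp
    calc (δ / a) * (Real.sqrt ((M : ℝ) + 1 + δ) - Real.sqrt δ)
        = k⁻¹ * (δ * (B N - B 0)) := hfin
      _ ≤ k⁻¹ * ∑ n ∈ Finset.range (N + 1), (min (B n) k - min (A n) k) :=
          mul_le_mul_of_nonneg_left hsum (inv_nonneg.mpr hk.le)
  · -- upper bound
    rw [hμS]
    have step : ∀ n ∈ Finset.range N, B (n + 1) - A (n + 1) ≤ δ * (A (n + 1) - A n) := by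
      intro n hn
      rw [hA, hB]
      simp only []
      push_cast
      rw [div_sub_div_same, div_sub_div_same, ← mul_div_assoc]
      apply div_le_div_of_nonneg_right _ hsπ.le
      exact sqrt_step_upper (n : ℝ) δ (Nat.cast_nonneg n) hδ0
    have hsum : ∑ n ∈ Finset.range (N + 1), (min (B n) k - min (A n) k)
        ≤ (B 0 - A 0) + δ * (A N - A 0) := by
      calc ∑ n ∈ Finset.range (N + 1), (min (B n) k - min (A n) k)
          ≤ ∑ n ∈ Finset.range (N + 1), (B n - A n) :=
            Finset.sum_le_sum fun n _ => hc_upper n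
        _ = (∑ n ∈ Finset.range N, (B (n + 1) - A (n + 1))) + (B 0 - A 0) :=
            Finset.sum_range_succ' _ _
        _ ≤ (∑ n ∈ Finset.range N, δ * (A (n + 1) - A n)) + (B 0 - A 0) := by
            have := Finset.sum_le_sum step
            linarith
        _ = (B 0 - A 0) + δ * (A N - A 0) := by
            rw [← Finset.mul_sum, Finset.sum_range_sub]
            ring
    have hA00 : A 0 = 0 := by
      rw [hA]; simp
    have hfin : k⁻¹ * ((B 0 - A 0) + δ * (A N - A 0))
        = (δ / a) * Real.sqrt ((M : ℝ) + 1) + Real.sqrt δ / a := by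
      rw [hA, hB]
      simp only []
      rw [hNcast]
      push_cast
      rw [Real.sqrt_zero, zero_add, ha]
      field_simp
      ring
    calc k⁻¹ * ∑ n ∈ Finset.range (N + 1), (min (B n) k - min (A n) k)
        ≤ k⁻¹ * ((B 0 - A 0) + δ * (A N - A 0)) :=
          mul_le_mul_of_nonneg_left hsum (inv_nonneg.mpr hk.le)
      _ = (δ / a) * Real.sqrt ((M : ℝ) + 1) + Real.sqrt δ / a := hfin
end

section
/- Let X be exponentially distributed with rate λ > 0, and set Y = πX². Then {Y} converges in law to the uniform distribution on [0, 1) as λ → 0⁺; i.e., for every δ ∈ (0, 1), P({Y} < δ) → δ as λ → 0⁺. -/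
open MeasureTheory Set Filter
open scoped Real

lemma expSqrt_continuous (c : ℝ) : Continuous (fun t : ℝ => Real.exp (-(c * Real.sqrt t))) :=
  Real.continuous_exp.comp ((continuous_const.mul Real.continuous_sqrt).neg)

lemma expSqrt_convex {c : ℝ} (hc : 0 < c) :
    ConvexOn ℝ (Ici 0) (fun t : ℝ => Real.exp (-(c * Real.sqrt t))) := by
  have hint : interior (Ici (0:ℝ)) = Ioi 0 := interior_Ici
  refine convexOn_of_hasDerivWithinAt2_nonneg (convex_Ici 0)
    ((expSqrt_continuous c).continuousOn)
    (f' := fun t => -(c/2) * (Real.sqrt t)⁻¹ * Real.exp (-(c * Real.sqrt t)))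
    (f'' := fun t => (c/(4 * Real.sqrt t ^ 3) + c^2/(4*t)) * Real.exp (-(c * Real.sqrt t)))
    ?_ ?_ ?_
  · rw [hint]
    intro t ht
    have ht : (0:ℝ) < t := ht
    have hs : 0 < Real.sqrt t := Real.sqrt_pos.2 ht
    have h1 : HasDerivAt (fun t : ℝ => -(c * Real.sqrt t)) (-(c * (1 / (2 * Real.sqrt t)))) t :=
      ((Real.hasDerivAt_sqrt ht.ne').const_mul c).neg
    have h2 := h1.exp
    refine (h2.congr_deriv ?_).hasDerivWithinAt
    field_simp
  · rw [hint]
    intro t ht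
    have ht : (0:ℝ) < t := ht
    have hs : 0 < Real.sqrt t := Real.sqrt_pos.2 ht
    have hts : Real.sqrt t ^ 2 = t := Real.sq_sqrt ht.le
    have h1 : HasDerivAt (fun t : ℝ => -(c * Real.sqrt t)) (-(c * (1 / (2 * Real.sqrt t)))) t :=
      ((Real.hasDerivAt_sqrt ht.ne').const_mul c).neg
    have h2 := h1.exp
    have hinv : HasDerivAt (fun t : ℝ => (Real.sqrt t)⁻¹)
        (-(1 / (2 * Real.sqrt t)) / (Real.sqrt t) ^ 2) t :=
      (Real.hasDerivAt_sqrt ht.ne').inv hs.ne'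
    have hu := (hinv.const_mul (-(c/2))).mul h2
    refine (hu.congr_deriv ?_).hasDerivWithinAt
    field_simp
    linear_combination (- 4*Real.sqrt t*c) * hts
  · rw [hint]
    intro t ht
    have ht : (0:ℝ) < t := ht
    have hs : 0 < Real.sqrt t := Real.sqrt_pos.2 ht
    have hexp : 0 < Real.exp (-(c * Real.sqrt t)) := Real.exp_pos _
    positivity

section Series

variable {c δ : ℝ} (hc : 0 < c) (hδ0 : 0 < δ) (hδ1 : δ < 1)

local notation "F" => fun t : ℝ => Real.exp (-(c * Real.sqrt t))

lemma expSqrt_anti {c : ℝ} (hc : 0 < c) :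
    Antitone (fun t : ℝ => Real.exp (-(c * Real.sqrt t))) := by
  intro x y hxy
  exact Real.exp_le_exp.2 (neg_le_neg (by
    exact mul_le_mul_of_nonneg_left (Real.sqrt_le_sqrt hxy) hc.le))

include hc in
lemma expSqrt_tendsto_zero :
    Tendsto (fun n : ℕ => Real.exp (-(c * Real.sqrt n))) atTop (nhds 0) := by
  apply Real.tendsto_exp_atBot.comp
  have h1 : Tendsto (fun n : ℕ => Real.sqrt n) atTop atTop := by
    apply tendsto_atTop_atTop.2
    intro b
    refine ⟨⌈b^2⌉₊, fun a ha => ?_⟩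
    calc b ≤ |b| := le_abs_self b
    _ = Real.sqrt (b^2) := (Real.sqrt_sq_eq_abs b).symm
    _ ≤ Real.sqrt a := Real.sqrt_le_sqrt (le_trans (Nat.le_ceil _) (by exact_mod_cast ha))
  have h2 : Tendsto (fun n : ℕ => c * Real.sqrt n) atTop atTop :=
    h1.const_mul_atTop hc
  exact tendsto_neg_atBot_iff.2 h2

include hc in
lemma expSqrt_telescope :
    HasSum (fun n : ℕ => Real.exp (-(c * Real.sqrt n)) - Real.exp (-(c * Real.sqrt (n+1)))) 1 := by
  have hnn : ∀ n : ℕ, 0 ≤ Real.exp (-(c * Real.sqrt n)) - Real.exp (-(c * Real.sqrt (n+1))) :=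
    fun n => sub_nonneg.2 (expSqrt_anti hc (by push_cast; linarith))
  rw [hasSum_iff_tendsto_nat_of_nonneg hnn]
  have : ∀ n : ℕ, ∑ i ∈ Finset.range n,
      (Real.exp (-(c * Real.sqrt i)) - Real.exp (-(c * Real.sqrt (i+1))))
      = Real.exp (-(c * Real.sqrt 0)) - Real.exp (-(c * Real.sqrt n)) := by
    intro n
    have := Finset.sum_range_sub' (fun i : ℕ => Real.exp (-(c * Real.sqrt i))) n
    rw [show Real.sqrt (0:ℝ) = Real.sqrt ((0:ℕ):ℝ) by norm_num, ← this]
    apply Finset.sum_congr rfl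
    intro i _
    push_cast
    ring_nf
  simp only [this, Real.sqrt_zero, mul_zero, neg_zero, Real.exp_zero, Nat.cast_zero]
  have := (expSqrt_tendsto_zero hc).const_sub 1
  simpa using this

end Series

section Bounds

variable {c δ : ℝ}

lemma expSqrt_low (hc : 0 < c) (hδ0 : 0 < δ) (hδ1 : δ < 1) {t : ℝ} (ht : 0 ≤ t) :
    δ * (Real.exp (-(c * Real.sqrt t)) - Real.exp (-(c * Real.sqrt (t+1))))
      ≤ Real.exp (-(c * Real.sqrt t)) - Real.exp (-(c * Real.sqrt (t+δ))) := by
  have h := (expSqrt_convex hc).secant_mono (a := t) (x := t+δ) (y := t+1)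
    (by exact ht) (by simp only [mem_Ici]; linarith) (by simp only [mem_Ici]; linarith)
    (by intro h; nlinarith) (by intro h; nlinarith) (by linarith)
  have e1 : t + δ - t = δ := by ring
  have e2 : t + 1 - t = 1 := by ring
  rw [e1, e2, div_one, div_le_iff₀ hδ0] at h
  nlinarith

lemma expSqrt_up (hc : 0 < c) (hδ0 : 0 < δ) (hδ1 : δ < 1) {t : ℝ} (ht : 0 ≤ t) :
    Real.exp (-(c * Real.sqrt (t+1))) - Real.exp (-(c * Real.sqrt (t+1+δ)))
      ≤ δ * (Real.exp (-(c * Real.sqrt t)) - Real.exp (-(c * Real.sqrt (t+1)))) := by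
  have h := (expSqrt_convex hc).secant_mono (a := t+1) (x := t) (y := t+1+δ)
    (by simp only [mem_Ici]; linarith) (by exact ht) (by simp only [mem_Ici]; linarith)
    (by intro h; nlinarith) (by intro h; nlinarith) (by linarith)
  have e1 : t - (t+1) = -1 := by ring
  have e2 : t + 1 + δ - (t+1) = δ := by ring
  rw [e1, e2] at h
  have h3 : (Real.exp (-(c * Real.sqrt t)) - Real.exp (-(c * Real.sqrt (t+1)))) / (-1)
      = -((Real.exp (-(c * Real.sqrt t)) - Real.exp (-(c * Real.sqrt (t+1))))) := by ring
  rw [h3, neg_le, ← neg_div, neg_sub, div_le_iff₀ hδ0] at h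
  nlinarith

lemma expSqrt_summable (hc : 0 < c) (hδ0 : 0 < δ) (hδ1 : δ < 1) :
    Summable (fun n : ℕ => Real.exp (-(c * Real.sqrt n)) - Real.exp (-(c * Real.sqrt (n+δ)))) := by
  refine Summable.of_nonneg_of_le (fun n => ?_) (fun n => ?_) (expSqrt_telescope hc).summable
  · exact sub_nonneg.2 (expSqrt_anti hc (by linarith))
  · have := expSqrt_anti hc (show (n:ℝ) + δ ≤ (n:ℝ) + 1 by linarith)
    linarith

set_option maxHeartbeats 1000000 in
lemma expSqrt_bounds (hc : 0 < c) (hδ0 : 0 < δ) (hδ1 : δ < 1) :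
    δ ≤ (∑' n : ℕ, (Real.exp (-(c * Real.sqrt n)) - Real.exp (-(c * Real.sqrt (n+δ)))))
    ∧ (∑' n : ℕ, (Real.exp (-(c * Real.sqrt n)) - Real.exp (-(c * Real.sqrt (n+δ)))))
      ≤ δ + (1 - Real.exp (-(c * Real.sqrt δ))) := by
  set F : ℝ → ℝ := fun t => Real.exp (-(c * Real.sqrt t)) with hF
  have hT := expSqrt_telescope hc
  have hTδ : HasSum (fun n : ℕ => δ * (F n - F (n+1))) δ := by
    simpa using hT.mul_left δ
  have hg := expSqrt_summable hc hδ0 hδ1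
  constructor
  · calc δ = ∑' n : ℕ, δ * (F n - F (n+1)) := hTδ.tsum_eq.symm
    _ ≤ ∑' n : ℕ, (F n - F (n+δ)) :=
      Summable.tsum_le_tsum (fun n => expSqrt_low hc hδ0 hδ1 (Nat.cast_nonneg n)) hTδ.summable hg
  · rw [hg.tsum_eq_zero_add]
    have h0 : F ((0:ℕ):ℝ) - F (((0:ℕ):ℝ) + δ) = 1 - F δ := by
      simp [hF]
    rw [h0]
    have hshift : Summable (fun n : ℕ => F ((n+1 : ℕ):ℝ) - F (((n+1:ℕ):ℝ) + δ)) :=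
      (summable_nat_add_iff 1).2 hg
    have hstep : ∀ n : ℕ, F ((n+1 : ℕ):ℝ) - F (((n+1:ℕ):ℝ) + δ) ≤ δ * (F n - F (n+1)) := by
      intro n
      have h := expSqrt_up hc hδ0 hδ1 (Nat.cast_nonneg n)
      push_cast
      simp only [hF]
      convert h using 4 <;> push_cast <;> ring
    have : ∑' n : ℕ, (F ((n+1 : ℕ):ℝ) - F (((n+1:ℕ):ℝ) + δ)) ≤ δ :=
      (Summable.tsum_le_tsum hstep hshift hTδ.summable).trans hTδ.tsum_eq.le
    linarith

end Bounds

section Meas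

open ProbabilityTheory

variable {l δ : ℝ}

lemma expPdf_eq (l : ℝ) :
    (fun x => ENNReal.ofReal (if 0 ≤ x then l * Real.exp (-l * x) else 0))
      = exponentialPDF l := by
  funext x
  rw [exponentialPDF_eq]
  simp [neg_mul]

lemma nu_Iic (hl : 0 < l) (x : ℝ) :
    (volume.withDensity (exponentialPDF l)) (Iic x)
      = ENNReal.ofReal (if 0 ≤ x then 1 - Real.exp (-(l * x)) else 0) := by
  rw [withDensity_apply _ measurableSet_Iic, lintegral_exponentialPDF_eq_antiDeriv hl]

lemma nu_Ico (hl : 0 < l) {a b : ℝ} (ha : 0 ≤ a) (hab : a ≤ b) :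
    (volume.withDensity (exponentialPDF l)) (Ico a b)
      = ENNReal.ofReal (Real.exp (-(l * a)) - Real.exp (-(l * b))) := by
  set ν := volume.withDensity (exponentialPDF l) with hν
  have hIcoIoc : ν (Ico a b) = ν (Ioc a b) :=
    measure_congr (Ico_ae_eq_Ioc.filter_mono
      (withDensity_absolutelyContinuous volume _).ae_le)
  have hIoc : Ioc a b = Iic b \ Iic a := (Iic_sdiff_Iic).symm
  have hfin : ν (Iic a) ≠ ⊤ := by
    rw [nu_Iic hl]
    exact ENNReal.ofReal_ne_top
  rw [hIcoIoc, hIoc, measure_diff (Iic_subset_Iic.2 hab) measurableSet_Iic.nullMeasurableSet hfin,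
    nu_Iic hl, nu_Iic hl, if_pos (ha.trans hab), if_pos ha]
  have h1 : Real.exp (-(l * a)) ≤ 1 := Real.exp_le_one_iff.2 (by nlinarith)
  rw [← ENNReal.ofReal_sub (1 - Real.exp (-(l*b)))
    (show (0:ℝ) ≤ 1 - Real.exp (-(l * a)) by linarith)]
  congr 1
  ring

lemma fract_set_eq (hδ0 : 0 < δ) (hδ1 : δ < 1) :
    {x : ℝ | Int.fract (π * x ^ 2) < δ} ∩ Ici 0
      = ⋃ n : ℕ, Ico (Real.sqrt ((n : ℝ)/π)) (Real.sqrt (((n : ℝ)+δ)/π)) := by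
  have hπ := Real.pi_pos
  ext x
  simp only [mem_inter_iff, mem_setOf_eq, mem_Ici, mem_iUnion, mem_Ico]
  constructor
  · rintro ⟨hf, hx⟩
    have hy : (0:ℝ) ≤ π * x ^ 2 := by positivity
    refine ⟨(⌊π * x ^ 2⌋).toNat, ?_, ?_⟩
    · have h1 : ((⌊π * x ^ 2⌋).toNat : ℝ) = (⌊π * x ^ 2⌋ : ℝ) := by
        exact_mod_cast Int.toNat_of_nonneg (Int.floor_nonneg.2 hy)
      have h2 : ((⌊π * x ^ 2⌋ : ℝ)) ≤ π * x ^ 2 := Int.floor_le _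
      have : ((⌊π * x ^ 2⌋).toNat : ℝ) / π ≤ x ^ 2 := by
        rw [h1, div_le_iff₀ hπ]; nlinarith
      calc Real.sqrt (((⌊π * x ^ 2⌋).toNat : ℝ)/π) ≤ Real.sqrt (x^2) := Real.sqrt_le_sqrt this
      _ = x := by rw [Real.sqrt_sq hx]
    · have h1 : ((⌊π * x ^ 2⌋).toNat : ℝ) = (⌊π * x ^ 2⌋ : ℝ) := by
        exact_mod_cast Int.toNat_of_nonneg (Int.floor_nonneg.2 hy)
      have h2 : π * x ^ 2 < (⌊π * x ^ 2⌋ : ℝ) + δ := by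
        have := Int.fract_add_floor (π * x ^ 2)
        have hfr : Int.fract (π * x ^ 2) = π * x ^ 2 - ⌊π * x ^ 2⌋ := Int.self_sub_floor _ |>.symm
        nlinarith [hf, hfr]
      rw [show ((⌊π * x ^ 2⌋).toNat : ℝ) + δ = (⌊π * x ^ 2⌋ : ℝ) + δ by rw [h1]]
      apply (Real.lt_sqrt hx).2
      rw [lt_div_iff₀ hπ]; nlinarith
  · rintro ⟨n, hn1, hn2⟩
    have hx : 0 ≤ x := le_trans (Real.sqrt_nonneg _) hn1
    have hle : (n : ℝ)/π ≤ x ^ 2 := by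
      have := Real.sqrt_le_sqrt (le_of_eq (rfl : (n:ℝ)/π = (n:ℝ)/π))
      calc (n : ℝ)/π = Real.sqrt ((n:ℝ)/π) ^ 2 := (Real.sq_sqrt (by positivity)).symm
      _ ≤ x ^ 2 := by nlinarith [Real.sqrt_nonneg ((n:ℝ)/π)]
    have hlt : x ^ 2 < ((n : ℝ)+δ)/π := (Real.lt_sqrt hx).1 hn2
    have h1 : (n : ℝ) ≤ π * x ^ 2 := by rw [div_le_iff₀ hπ] at hle; nlinarith
    have h2 : π * x ^ 2 < (n : ℝ) + δ := by rw [lt_div_iff₀ hπ] at hlt; nlinarith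
    have hfl : ⌊π * x ^ 2⌋ = (n : ℤ) := by
      rw [Int.floor_eq_iff]
      constructor
      · exact_mod_cast h1
      · push_cast; linarith
    refine ⟨?_, hx⟩
    have : Int.fract (π * x ^ 2) = π * x ^ 2 - ((n:ℤ):ℝ) := by
      rw [Int.fract, hfl]
    rw [this]; push_cast; linarith

lemma nu_fract_set (hl : 0 < l) (hδ0 : 0 < δ) (hδ1 : δ < 1) :
    (volume.withDensity (exponentialPDF l)) {x : ℝ | Int.fract (π * x ^ 2) < δ}
      = ∑' n : ℕ, ENNReal.ofReal
          (Real.exp (-(l * Real.sqrt ((n:ℝ)/π))) - Real.exp (-(l * Real.sqrt (((n:ℝ)+δ)/π)))) := by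
  have hπ := Real.pi_pos
  set ν := volume.withDensity (exponentialPDF l) with hν
  set S := {x : ℝ | Int.fract (π * x ^ 2) < δ} with hS
  have hSm : MeasurableSet S := by
    have : Measurable fun x : ℝ => Int.fract (π * x ^ 2) :=
      Measurable.fract (by measurability)
    exact measurableSet_lt this measurable_const
  have hneg : ν (Iio 0) = 0 := by
    rw [hν, withDensity_apply _ measurableSet_Iio]
    exact lintegral_exponentialPDF_of_nonpos le_rfl
  have hsplit : ν S = ν (S ∩ Ici 0) := by
    apply le_antisymm
    · calc ν S ≤ ν ((S ∩ Ici 0) ∪ Iio 0) := by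
            refine measure_mono fun x hx => ?_
            by_cases h : 0 ≤ x
            · exact Or.inl ⟨hx, h⟩
            · exact Or.inr (lt_of_not_ge h)
      _ ≤ ν (S ∩ Ici 0) + ν (Iio 0) := measure_union_le _ _
      _ = ν (S ∩ Ici 0) := by rw [hneg, add_zero]
    · exact measure_mono inter_subset_left
  rw [hsplit, fract_set_eq hδ0 hδ1]
  have hmono : ∀ m n : ℕ, m < n →
      Real.sqrt (((m:ℝ)+δ)/π) ≤ Real.sqrt ((n:ℝ)/π) := by
    intro m n h
    apply Real.sqrt_le_sqrt
    have : (m : ℝ) + 1 ≤ n := by exact_mod_cast h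
    gcongr
    linarith
  have hd : Pairwise (Function.onFun Disjoint
      fun n : ℕ => Ico (Real.sqrt ((n:ℝ)/π)) (Real.sqrt (((n:ℝ)+δ)/π))) := by
    have key : ∀ m n : ℕ, m < n → Disjoint
        (Ico (Real.sqrt ((m:ℝ)/π)) (Real.sqrt (((m:ℝ)+δ)/π)))
        (Ico (Real.sqrt ((n:ℝ)/π)) (Real.sqrt (((n:ℝ)+δ)/π))) := by
      intro m n h
      refine Set.disjoint_left.2 fun x hxm hxn => absurd hxm.2 (not_lt.2 ?_)
      exact le_trans (hmono m n h) hxn.1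
    intro m n hmn
    rcases lt_or_gt_of_ne hmn with h | h
    · exact key m n h
    · exact (key n m h).symm
  rw [measure_iUnion hd (fun n => measurableSet_Ico)]
  congr 1
  funext n
  refine nu_Ico hl (Real.sqrt_nonneg _) (Real.sqrt_le_sqrt ?_)
  have hπ' : 0 < π := Real.pi_pos
  gcongr
  linarith

end Meas

/-- Theorem 4: if `X ~ EXP(λ)`, then `{πX²}` converges in law to the uniform
distribution on `[0,1)` as `λ → 0⁺`. -/
theorem exponential_pi_sq_benford_limit
    (μ : ℝ → Measure ℝ)
    (hμ : ∀ l : ℝ, 0 < l → μ l = volume.withDensity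
      (fun x => ENNReal.ofReal (if 0 ≤ x then l * Real.exp (-l * x) else 0))) :
    ∀ δ ∈ Ioo (0 : ℝ) 1,
      Tendsto (fun l => ((μ l) {x : ℝ | Int.fract (π * x ^ 2) < δ}).toReal)
        (nhdsWithin 0 (Ioi 0)) (nhds δ) := by
  intro δ hδ
  obtain ⟨hδ0, hδ1⟩ := hδ
  have hπ : (0:ℝ) < π := Real.pi_pos
  have hsπ : 0 < Real.sqrt π := Real.sqrt_pos.2 hπ
  have key : ∀ l : ℝ, 0 < l →
      ((μ l) {x : ℝ | Int.fract (π * x ^ 2) < δ}).toReal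
        = ∑' n : ℕ, (Real.exp (-(l / Real.sqrt π * Real.sqrt n))
            - Real.exp (-(l / Real.sqrt π * Real.sqrt ((n:ℝ) + δ)))) := by
    intro l hl
    have harg : ∀ x : ℝ, 0 ≤ x → l * Real.sqrt (x/π) = l / Real.sqrt π * Real.sqrt x := by
      intro x hx
      rw [Real.sqrt_div hx]
      ring
    rw [hμ l hl, expPdf_eq l, nu_fract_set hl hδ0 hδ1,
      ENNReal.tsum_toReal_eq (fun n => ENNReal.ofReal_ne_top)]
    apply tsum_congr
    intro n
    have hmono : Real.sqrt ((n:ℝ)/π) ≤ Real.sqrt (((n:ℝ)+δ)/π) := by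
      apply Real.sqrt_le_sqrt
      gcongr
      linarith
    have hnn : (0:ℝ) ≤ Real.exp (-(l * Real.sqrt ((n:ℝ)/π)))
        - Real.exp (-(l * Real.sqrt (((n:ℝ)+δ)/π))) := by
      refine sub_nonneg.2 (Real.exp_le_exp.2 (neg_le_neg ?_))
      exact mul_le_mul_of_nonneg_left hmono hl.le
    rw [ENNReal.toReal_ofReal hnn, harg n (Nat.cast_nonneg n), harg _ (by positivity)]
  have hev : ∀ᶠ l in nhdsWithin (0:ℝ) (Ioi 0), l ∈ Ioi (0:ℝ) := self_mem_nhdsWithin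
  have hlow : ∀ᶠ l in nhdsWithin (0:ℝ) (Ioi 0),
      δ ≤ ((μ l) {x : ℝ | Int.fract (π * x ^ 2) < δ}).toReal := by
    refine hev.mono fun l hl => ?_
    have hc : 0 < l / Real.sqrt π := div_pos hl hsπ
    rw [key l hl]
    exact (expSqrt_bounds hc hδ0 hδ1).1
  have hup : ∀ᶠ l in nhdsWithin (0:ℝ) (Ioi 0),
      ((μ l) {x : ℝ | Int.fract (π * x ^ 2) < δ}).toReal
        ≤ δ + (1 - Real.exp (-(l / Real.sqrt π * Real.sqrt δ))) := by
    refine hev.mono fun l hl => ?_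
    have hc : 0 < l / Real.sqrt π := div_pos hl hsπ
    rw [key l hl]
    exact (expSqrt_bounds hc hδ0 hδ1).2
  have hub : Tendsto (fun l : ℝ => δ + (1 - Real.exp (-(l / Real.sqrt π * Real.sqrt δ))))
      (nhdsWithin (0:ℝ) (Ioi 0)) (nhds δ) := by
    have hcont : Continuous fun l : ℝ =>
        δ + (1 - Real.exp (-(l / Real.sqrt π * Real.sqrt δ))) := by
      fun_prop
    have h := hcont.tendsto' 0 δ (by simp)
    exact h.mono_left nhdsWithin_le_nhds
  exact tendsto_of_tendsto_of_tendsto_of_le_of_le' tendsto_const_nhds hub hlow hup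
end

section
/- With μ = λ/√π and any δ ∈ (0,1), if X ~ EXP(λ) and Y = πX², then δ·e^(−μ√δ) ≤ P({Y} < δ) ≤ 1 − e^(−μ√δ) + δ. -/
open MeasureTheory Set
open scoped Real

private lemma tele_hasSum {A : ℕ → ℝ} (hA : ∀ n, A (n + 1) ≤ A n)
    (hlim : Filter.Tendsto A Filter.atTop (nhds 0)) :
    HasSum (fun n => A n - A (n + 1)) (A 0) := by
  rw [hasSum_iff_tendsto_nat_of_nonneg (fun i => sub_nonneg.2 (hA i))]
  simp only [Finset.sum_range_sub' A]
  simpa using tendsto_const_nhds.sub hlim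

private lemma aux_sum_bounds (g : ℝ → ℝ) (hconv : ConvexOn ℝ (Ici 0) g)
    (hanti : Antitone g) (hg0 : g 0 = 1)
    (hlim : Filter.Tendsto (fun n : ℕ => g n) Filter.atTop (nhds 0))
    (δ : ℝ) (h0 : 0 < δ) (h1 : δ < 1) :
    Summable (fun j : ℕ => g j - g (j + δ)) ∧
      δ * g δ ≤ (∑' j : ℕ, (g j - g (j + δ))) ∧
      (∑' j : ℕ, (g j - g (j + δ))) ≤ 1 - g δ + δ := by
  set u : ℕ → ℝ := fun j => g j - g (j + δ) with hu_def
  set v : ℕ → ℝ := fun j => g j - g (j + 1) with hv_def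
  have hv : HasSum v 1 := by
    have := tele_hasSum (A := fun n : ℕ => g n)
      (fun n => hanti (by push_cast; linarith)) hlim
    simp only [Nat.cast_zero, hg0] at this
    convert this using 2 with n
    simp only [hv_def]
    push_cast
    ring_nf
  have hun : ∀ j, 0 ≤ u j := fun j => sub_nonneg.2 (hanti (by linarith))
  have huv : ∀ j, u j ≤ v j := by
    intro j
    have : g ((j : ℝ) + 1) ≤ g ((j : ℝ) + δ) := hanti (by linarith)
    simp only [hu_def, hv_def]
    linarith
  have hvn : ∀ j, 0 ≤ v j := fun j => sub_nonneg.2 (hanti (by linarith))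
  have hu : Summable u := Summable.of_nonneg_of_le hun huv hv.summable
  -- convexity facts
  have hB : ∀ x : ℝ, 0 ≤ x → g (x + δ) ≤ (1 - δ) * g x + δ * g (x + 1) := by
    intro x hx
    have := hconv.2 (mem_Ici.2 hx) (mem_Ici.2 (by linarith : (0:ℝ) ≤ x + 1))
      (by linarith : (0:ℝ) ≤ 1 - δ) h0.le (by ring)
    simp only [smul_eq_mul] at this
    have e : (1 - δ) * x + δ * (x + 1) = x + δ := by ring
    rwa [e] at this
  have hA : ∀ x : ℝ, 0 ≤ x → g (x + 1) - g (x + 1 + δ) ≤ δ * (g x - g (x + 1)) := by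
    intro x hx
    have h := hconv.slope_mono_adjacent (mem_Ici.2 hx)
      (mem_Ici.2 (by linarith : (0:ℝ) ≤ x + 1 + δ))
      (by linarith : x < x + 1) (by linarith : x + 1 < x + 1 + δ)
    have e1 : x + 1 - x = 1 := by ring
    have e2 : x + 1 + δ - (x + 1) = δ := by ring
    rw [e1, e2, div_one, le_div_iff₀ h0] at h
    nlinarith
  refine ⟨hu, ?_, ?_⟩
  · -- lower bound
    set A : ℕ → ℝ := fun n => if n = 0 then g δ else g n with hA_def
    have hA_step : ∀ n, A (n + 1) ≤ A n := by
      intro n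
      cases n with
      | zero => simpa [hA_def] using hanti h1.le
      | succ k =>
        simp only [hA_def, if_neg (Nat.succ_ne_zero _), if_neg (Nat.succ_ne_zero _)]
        exact hanti (by push_cast; linarith)
    have hA_lim : Filter.Tendsto A Filter.atTop (nhds 0) := by
      apply hlim.congr'
      filter_upwards [Filter.eventually_ge_atTop 1] with n hn
      simp only [hA_def]
      rw [if_neg (by omega)]
    have hw : HasSum (fun n => δ * (A n - A (n + 1))) (δ * g δ) := by
      have := (tele_hasSum hA_step hA_lim).mul_left δ
      simpa [hA_def] using this
    have hwu : ∀ j, δ * (A j - A (j + 1)) ≤ u j := by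
      intro j
      cases j with
      | zero =>
        have hb0 := hB 0 le_rfl
        rw [zero_add, hg0] at hb0
        have hgd : g δ ≤ 1 := by rw [← hg0]; exact hanti h0.le
        simp only [hA_def, hu_def, if_pos, if_neg (Nat.one_ne_zero), Nat.cast_zero, Nat.cast_one,
          zero_add]
        rw [zero_add] at hb0
        nlinarith [mul_le_mul_of_nonneg_left hgd h0.le, hb0, hg0]
      | succ k =>
        have hb := hB ((k : ℝ) + 1) (by positivity)
        simp only [hA_def, hu_def, if_neg (Nat.succ_ne_zero _), hu_def]
        push_cast
        nlinarith
    calc δ * g δ = ∑' j : ℕ, δ * (A j - A (j + 1)) := hw.tsum_eq.symm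
      _ ≤ ∑' j, u j := Summable.tsum_le_tsum hwu hw.summable hu
  · -- upper bound
    have h1' : ∑' j, u j = u 0 + ∑' j, u (j + 1) := hu.tsum_eq_zero_add
    have hu0 : u 0 = 1 - g δ := by simp [hu_def, hg0]
    have hterm : ∀ j : ℕ, u (j + 1) ≤ δ * v j := by
      intro j
      have := hA j (Nat.cast_nonneg j)
      simp only [hu_def, hv_def]
      push_cast
      linarith
    have h2' : ∑' j, u (j + 1) ≤ ∑' j, δ * v j :=
      Summable.tsum_le_tsum hterm ((summable_nat_add_iff 1).2 hu) (hv.summable.mul_left δ)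
    have h3' : ∑' j, δ * v j = δ := by rw [tsum_mul_left, hv.tsum_eq, mul_one]
    calc (∑' j, u j) = u 0 + ∑' j, u (j + 1) := h1'
      _ ≤ (1 - g δ) + δ := by rw [hu0]; linarith [h2'.trans_eq h3']

/-- Key estimate in the proof of Theorem 4: for `X ~ EXP(λ)`, `Y = πX²` and
`μ' = λ/√π`, one has `δ·e^(−μ'√δ) ≤ P({Y} < δ) ≤ 1 − e^(−μ'√δ) + δ`
for any `δ ∈ (0,1)`. -/
theorem exponential_pi_sq_fract_bounds
    (l : ℝ) (hl : 0 < l)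
    (μ : Measure ℝ)
    (hμ : μ = volume.withDensity
      (fun x => ENNReal.ofReal (if 0 ≤ x then l * Real.exp (-l * x) else 0)))
    (m : ℝ) (hm : m = l / Real.sqrt π)
    (δ : ℝ) (hδ : δ ∈ Ioo (0 : ℝ) 1) :
    δ * Real.exp (-m * Real.sqrt δ)
        ≤ (μ {x : ℝ | Int.fract (π * x ^ 2) < δ}).toReal ∧
    (μ {x : ℝ | Int.fract (π * x ^ 2) < δ}).toReal
        ≤ 1 - Real.exp (-m * Real.sqrt δ) + δ := by
  obtain ⟨hδ0, hδ1⟩ := hδ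
  have hπ := Real.pi_pos
  have hm' : 0 < m := hm ▸ div_pos hl (Real.sqrt_pos.2 hπ)
  set g : ℝ → ℝ := fun t => Real.exp (-m * Real.sqrt t) with hg
  -- properties of g
  have hanti : Antitone g := by
    intro s t h
    have h2 := mul_le_mul_of_nonneg_left (Real.sqrt_le_sqrt h) hm'.le
    exact Real.exp_le_exp.2 (by simp only [neg_mul]; linarith)
  have hg0 : g 0 = 1 := by simp [hg]
  have hconv : ConvexOn ℝ (Ici 0) g := by
    refine ⟨convex_Ici 0, fun x hx y hy c d hc hd hcd => ?_⟩
    simp only [smul_eq_mul, hg]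
    have hsqrt : c * Real.sqrt x + d * Real.sqrt y ≤ Real.sqrt (c * x + d * y) := by
      have := (Real.strictConcaveOn_sqrt.concaveOn).2 hx hy hc hd hcd
      simpa [smul_eq_mul] using this
    have h2 := mul_le_mul_of_nonneg_left hsqrt hm'.le
    have h1 : -m * Real.sqrt (c * x + d * y)
        ≤ c * (-m * Real.sqrt x) + d * (-m * Real.sqrt y) := by nlinarith
    calc Real.exp (-m * Real.sqrt (c * x + d * y))
        ≤ Real.exp (c * (-m * Real.sqrt x) + d * (-m * Real.sqrt y)) := Real.exp_le_exp.2 h1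
      _ ≤ c * Real.exp (-m * Real.sqrt x) + d * Real.exp (-m * Real.sqrt y) := by
          have := convexOn_exp.2 (mem_univ (-m * Real.sqrt x)) (mem_univ (-m * Real.sqrt y))
            hc hd hcd
          simpa [smul_eq_mul] using this
  have hlim : Filter.Tendsto (fun n : ℕ => g n) Filter.atTop (nhds 0) := by
    have hsq : Filter.Tendsto Real.sqrt Filter.atTop Filter.atTop := by
      refine Filter.tendsto_atTop_atTop.2 fun B => ⟨B ^ 2, fun x hx => ?_⟩
      calc B ≤ |B| := le_abs_self B
        _ = Real.sqrt (B ^ 2) := (Real.sqrt_sq_eq_abs B).symm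
        _ ≤ Real.sqrt x := Real.sqrt_le_sqrt hx
    have h1 : Filter.Tendsto (fun n : ℕ => -m * Real.sqrt n) Filter.atTop Filter.atBot :=
      Filter.Tendsto.const_mul_atTop_of_neg (by linarith)
        (hsq.comp tendsto_natCast_atTop_atTop)
    exact Real.tendsto_exp_atBot.comp h1
  obtain ⟨hu_sum, hlow, hup⟩ := aux_sum_bounds g hconv hanti hg0 hlim δ hδ0 hδ1
  have hun : ∀ j : ℕ, 0 ≤ g j - g (j + δ) := fun j => sub_nonneg.2 (hanti (by linarith))
  -- interval endpoints
  set a : ℕ → ℝ := fun j => Real.sqrt (j / π) with ha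
  set b : ℕ → ℝ := fun j => Real.sqrt ((j + δ) / π) with hb
  have ha0 : ∀ j, 0 ≤ a j := fun j => Real.sqrt_nonneg _
  have hab : ∀ j, a j ≤ b j := fun j => Real.sqrt_le_sqrt (by gcongr; linarith)
  have hbma : ∀ j, b j ≤ a (j + 1) := by
    intro j
    apply Real.sqrt_le_sqrt
    push_cast
    gcongr
  have hexp_a : ∀ j : ℕ, Real.exp (-(l * a j)) = g j := by
    intro j
    simp only [ha, hg]
    congr 1
    rw [Real.sqrt_div (Nat.cast_nonneg j) π, hm]
    field_simp
  have hexp_b : ∀ j : ℕ, Real.exp (-(l * b j)) = g (j + δ) := by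
    intro j
    simp only [hb, hg]
    congr 1
    rw [Real.sqrt_div (by positivity) π, hm]
    field_simp
  -- the measure
  have hμν : μ = volume.withDensity (fun x => ProbabilityTheory.exponentialPDF l x) := by
    rw [hμ]
    congr 1
    funext x
    rw [ProbabilityTheory.exponentialPDF_eq]
    simp [neg_mul]
  have hIic : ∀ x : ℝ, μ (Iic x)
      = ENNReal.ofReal (if 0 ≤ x then 1 - Real.exp (-(l * x)) else 0) := by
    intro x
    rw [hμν, withDensity_apply _ measurableSet_Iic,
      ProbabilityTheory.lintegral_exponentialPDF_eq_antiDeriv hl]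
  have hsing : ∀ x : ℝ, μ {x} = 0 := fun x => by
    rw [hμν]; exact withDensity_absolutelyContinuous volume _ (measure_singleton x)
  have hIio : ∀ x : ℝ, 0 ≤ x → μ (Iio x) = ENNReal.ofReal (1 - Real.exp (-(l * x))) := by
    intro x hx
    have key : μ (Iio x) = μ (Iic x) :=
      le_antisymm (measure_mono Iio_subset_Iic_self)
        (by rw [← Set.Iio_union_right]
            exact (measure_union_le _ _).trans (by rw [hsing x, add_zero]))
    rw [key, hIic, if_pos hx]
  have hIio0 : μ (Iio 0) = 0 := by
    rw [hIio 0 le_rfl]; simp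
  have hIco : ∀ x y : ℝ, 0 ≤ x → x ≤ y →
      μ (Ico x y) = ENNReal.ofReal (Real.exp (-(l * x)) - Real.exp (-(l * y))) := by
    intro x y hx hxy
    have hdisj : Disjoint (Iio x) (Ico x y) := by
      rw [Set.disjoint_left]
      rintro z hz ⟨h1, _⟩
      exact absurd h1 (not_le.2 hz)
    have h := measure_union (μ := μ) hdisj measurableSet_Ico
    rw [Set.Iio_union_Ico_eq_Iio hxy, hIio y (hx.trans hxy), hIio x hx] at h
    have hexp1 : Real.exp (-(l * y)) ≤ Real.exp (-(l * x)) :=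
      Real.exp_le_exp.2 (by nlinarith)
    have hexp2 : Real.exp (-(l * x)) ≤ 1 := by
      rw [Real.exp_le_one_iff]
      have : 0 ≤ l * x := mul_nonneg hl.le hx
      linarith
    have hsplit : ENNReal.ofReal (1 - Real.exp (-(l * y)))
        = ENNReal.ofReal (1 - Real.exp (-(l * x)))
          + ENNReal.ofReal (Real.exp (-(l * x)) - Real.exp (-(l * y))) := by
      rw [← ENNReal.ofReal_add (by linarith) (by linarith)]
      ring_nf
    rw [hsplit] at h
    exact ((ENNReal.add_right_inj ENNReal.ofReal_ne_top).1 h).symm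
  -- set identification
  set T : Set ℝ := ⋃ j : ℕ, Ico (a j) (b j) with hT
  have hTS : T ⊆ {x : ℝ | Int.fract (π * x ^ 2) < δ} := by
    intro x hx
    simp only [hT, mem_iUnion, mem_Ico] at hx
    obtain ⟨j, hxj, hxj'⟩ := hx
    have hx0 : (0 : ℝ) ≤ x := (ha0 j).trans hxj
    have h1 : (j : ℝ) / π ≤ x ^ 2 := by
      have h := pow_le_pow_left₀ (ha0 j) hxj 2
      rwa [ha, Real.sq_sqrt (by positivity)] at h
    have h2 : x ^ 2 < ((j : ℝ) + δ) / π := (Real.lt_sqrt hx0).1 hxj'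
    have hy1 : (j : ℝ) ≤ π * x ^ 2 := by rw [mul_comm]; exact (div_le_iff₀ hπ).1 h1
    have hy2 : π * x ^ 2 < (j : ℝ) + δ := by rw [mul_comm]; exact (lt_div_iff₀ hπ).1 h2
    have hfl : ⌊π * x ^ 2⌋ = (j : ℤ) := by
      rw [Int.floor_eq_iff]
      constructor
      · exact_mod_cast hy1
      · push_cast; linarith
    show Int.fract (π * x ^ 2) < δ
    have : Int.fract (π * x ^ 2) = π * x ^ 2 - (j : ℝ) := by
      rw [← Int.self_sub_floor, hfl]
      norm_num
    rw [this]
    linarith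
  have hSsub : {x : ℝ | Int.fract (π * x ^ 2) < δ} ⊆ T ∪ Iio 0 := by
    intro x hx
    rcases lt_or_ge x 0 with h | h
    · exact Or.inr h
    · left
      have hy0 : 0 ≤ π * x ^ 2 := by positivity
      set j : ℕ := ⌊π * x ^ 2⌋.toNat with hj
      have hjf : ((⌊π * x ^ 2⌋ : ℤ) : ℝ) = (j : ℝ) := by
        rw [hj]
        exact_mod_cast (Int.toNat_of_nonneg (Int.floor_nonneg.2 hy0)).symm
      have h1 : (j : ℝ) ≤ π * x ^ 2 := hjf ▸ Int.floor_le _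
      have h2 : π * x ^ 2 < (j : ℝ) + δ := by
        have h3 : π * x ^ 2 - (j : ℝ) < δ := by
          rw [← hjf, Int.self_sub_floor]
          exact hx
        linarith
      refine mem_iUnion.2 ⟨j, ?_, ?_⟩
      · show a j ≤ x
        have h4 : Real.sqrt ((j : ℝ) / π) ≤ Real.sqrt (x ^ 2) :=
          Real.sqrt_le_sqrt ((div_le_iff₀ hπ).2 (by rw [mul_comm]; exact h1))
        rwa [Real.sqrt_sq h] at h4
      · show x < b j
        exact (Real.lt_sqrt h).2 ((lt_div_iff₀ hπ).2 (by rw [mul_comm]; exact h2))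
  have hST : μ {x : ℝ | Int.fract (π * x ^ 2) < δ} = μ T := by
    refine le_antisymm ?_ (measure_mono hTS)
    calc μ {x : ℝ | Int.fract (π * x ^ 2) < δ} ≤ μ (T ∪ Iio 0) := measure_mono hSsub
      _ ≤ μ T + μ (Iio 0) := measure_union_le _ _
      _ = μ T := by rw [hIio0, add_zero]
  have hdisjT : Pairwise (Function.onFun Disjoint fun j : ℕ => Ico (a j) (b j)) := by
    have key : ∀ i j : ℕ, i < j → Disjoint (Ico (a i) (b i)) (Ico (a j) (b j)) := by
      intro i j hij
      apply Set.disjoint_left.2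
      rintro x ⟨_, hxb⟩ ⟨hxa, _⟩
      have h2 : a (i + 1) ≤ a j := by
        apply Real.sqrt_le_sqrt
        gcongr
        exact_mod_cast hij
      exact absurd ((hxa.trans_lt hxb).trans_le ((hbma i).trans h2)) (lt_irrefl _)
    intro i j hij
    rcases lt_or_gt_of_ne hij with h | h
    · exact key i j h
    · exact (key j i h).symm
  have hμT : μ T = ∑' j : ℕ, ENNReal.ofReal (g j - g (j + δ)) := by
    rw [hT, measure_iUnion hdisjT fun j => measurableSet_Ico]
    congr 1
    funext j
    rw [hIco (a j) (b j) (ha0 j) (hab j), hexp_a j, hexp_b j]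
  have hP : μ {x : ℝ | Int.fract (π * x ^ 2) < δ}
      = ENNReal.ofReal (∑' j : ℕ, (g j - g (j + δ))) := by
    rw [hST, hμT, ENNReal.ofReal_tsum_of_nonneg hun hu_sum]
  rw [hP, ENNReal.toReal_ofReal (tsum_nonneg hun)]
  exact ⟨hlow, hup⟩
end

section
/- There is no positive random variable X that satisfies base-b Benford's law (i.e., {log_b X} uniform on [0,1)) simultaneously for every integer base b ≥ 2. -/
open MeasureTheory Set Filter

lemma cos_two_pi_fract (y : ℝ) :
    Real.cos (2 * Real.pi * Int.fract y) = Real.cos (2 * Real.pi * y) := by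
  have h1 : (2 * Real.pi * Int.fract y) = 2 * Real.pi * y - (⌊y⌋ : ℝ) * (2 * Real.pi) := by
    rw [Int.fract]; ring
  have h2 : Real.sin ((⌊y⌋ : ℝ) * (2 * Real.pi)) = 0 := by
    have := Real.sin_int_mul_pi (2 * ⌊y⌋)
    push_cast at this
    rw [show (⌊y⌋:ℝ) * (2 * Real.pi) = 2 * (⌊y⌋:ℝ) * Real.pi by ring]
    exact this
  rw [h1, Real.cos_sub, Real.cos_int_mul_two_pi, h2]
  ring

lemma integral_cos_Ico :
    ∫ y in Ico (0:ℝ) 1, Real.cos (2 * Real.pi * y) = 0 := by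
  rw [integral_Ico_eq_integral_Ioo, ← MeasureTheory.integral_Ioc_eq_integral_Ioo,
    ← intervalIntegral.integral_of_le (by norm_num : (0:ℝ) ≤ 1)]
  have hne : (2 * Real.pi) ≠ 0 := by positivity
  rw [intervalIntegral.integral_comp_mul_left (a := 0) (b := 1) (f := Real.cos) hne,
    integral_cos]
  simp [Real.sin_two_pi]

lemma meas_fract_logb (b : ℕ) :
    Measurable (fun x : ℝ => Int.fract (Real.logb b x)) := by
  have h1 : Measurable (fun x : ℝ => Real.logb b x) := by
    simpa [Real.logb, div_eq_mul_inv] using Real.measurable_log.mul_const (Real.log b)⁻¹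
  exact measurable_fract.comp h1

/-- Luque–Lacasa: no positive random variable satisfies base-`b` Benford's
law (`{log_b X}` uniform on `[0,1)`) simultaneously for every integer base
`b ≥ 2`. -/
theorem no_universal_benford :
    ¬ ∃ μ : Measure ℝ, IsProbabilityMeasure μ ∧ μ (Ioi (0 : ℝ))ᶜ = 0 ∧
      ∀ b : ℕ, 2 ≤ b →
        Measure.map (fun x => Int.fract (Real.logb b x)) μ
          = volume.restrict (Ico (0 : ℝ) 1) := by
  rintro ⟨μ, hprob, -, h⟩
  -- For each base b ≥ 2 the integral of cos(2π log_b x) vanishes.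
  have key : ∀ b : ℕ, 2 ≤ b → ∫ x, Real.cos (2 * Real.pi * Real.logb b x) ∂μ = 0 := by
    intro b hb
    have hmeas := meas_fract_logb b
    have h1 : ∫ x, Real.cos (2 * Real.pi * Real.logb b x) ∂μ
        = ∫ x, Real.cos (2 * Real.pi * Int.fract (Real.logb b x)) ∂μ := by
      congr 1; ext x; rw [cos_two_pi_fract]
    have h2 : ∫ x, Real.cos (2 * Real.pi * Int.fract (Real.logb b x)) ∂μ
        = ∫ y, Real.cos (2 * Real.pi * y)
            ∂(Measure.map (fun x => Int.fract (Real.logb b x)) μ) := by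
      rw [integral_map hmeas.aemeasurable]
      exact ((Real.continuous_cos.comp (continuous_const.mul continuous_id)).measurable
        ).aestronglyMeasurable
    rw [h1, h2, h b hb]
    exact integral_cos_Ico
  -- Dominated convergence: the integrals tend to 1 as b → ∞.
  have hlim : Tendsto (fun b : ℕ => ∫ x, Real.cos (2 * Real.pi * Real.logb b x) ∂μ)
      atTop (nhds 1) := by
    have h1 : (1 : ℝ) = ∫ _x, (1 : ℝ) ∂μ := by simp
    rw [h1]
    apply MeasureTheory.tendsto_integral_of_dominated_convergence (fun _ => (1 : ℝ))
    · intro b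
      exact ((Real.continuous_cos.comp (continuous_const.mul continuous_id)).measurable.comp
        (by simpa [Real.logb, div_eq_mul_inv] using
          Real.measurable_log.mul_const (Real.log b)⁻¹)).aestronglyMeasurable
    · exact integrable_const 1
    · intro b
      filter_upwards with x
      simpa using Real.abs_cos_le_one _
    · filter_upwards with x
      have hlog : Tendsto (fun b : ℕ => Real.log b) atTop atTop :=
        Real.tendsto_log_atTop.comp tendsto_natCast_atTop_atTop
      have hdiv : Tendsto (fun b : ℕ => Real.logb b x) atTop (nhds 0) := by
        simpa [Real.logb] using (tendsto_const_nhds (x := Real.log x)).div_atTop hlog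
      have h2 : Tendsto (fun b : ℕ => 2 * Real.pi * Real.logb b x) atTop (nhds 0) := by
        simpa using hdiv.const_mul (2 * Real.pi)
      have := (Real.continuous_cos.tendsto 0).comp h2
      simpa [Function.comp_def] using this
  have h0 : Tendsto (fun b : ℕ => ∫ x, Real.cos (2 * Real.pi * Real.logb b x) ∂μ)
      atTop (nhds 0) := by
    apply Tendsto.congr' _ tendsto_const_nhds
    filter_upwards [eventually_ge_atTop 2] with b hb
    exact (key b hb).symm
  exact one_ne_zero (tendsto_nhds_unique hlim h0)
end
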